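/- arXiv:1905.12753 — 4 statements merged into one kernel-verified Lean document; each statement's English description precedes it below -/
import Mathlib

section
/- Let S be a finite set of points, each assigned a color, with |S| ≥ 2, and suppose that for every color c₀ the number of points of S with color c₀ is at most ⌊|S|/2⌋. Then S can be partitioned into parts, each of size 2 or 3, such that within each part all points have pairwise distinct colors and at most one part has size 3 (and a part of size 3 occurs only if |S| is odd). -/
open Finset

private lemma stmt_8_aux {X C : Type*} [DecidableEq X] [DecidableEq C] (c : X → C) :
    ∀ n : ℕ, ∀ S : Finset X, S.card = n → 2 ≤ S.card →
    (∀ c₀ : C, (S.filter fun j => c j = c₀).card ≤ S.card / 2) →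
    ∃ P : Finset (Finset X),
      P.biUnion id = S ∧
      (∀ K ∈ P, ∀ K' ∈ P, K ≠ K' → Disjoint K K') ∧
      (∀ K ∈ P, (K.card = 2 ∨ K.card = 3) ∧
        ∀ j ∈ K, ∀ j' ∈ K, j ≠ j' → c j ≠ c j') ∧
      (P.filter fun K => K.card = 3).card ≤ 1 ∧
      ((∃ K ∈ P, K.card = 3) → Odd S.card) := by
  intro n
  induction n using Nat.strong_induction_on with
  | _ n ih =>
  intro S hn h2 hcap
  rcases le_or_gt n 3 with hle | hlt
  · -- base case: n = 2 or 3, all colors distinct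
    have hdist : ∀ j ∈ S, ∀ j' ∈ S, j ≠ j' → c j ≠ c j' := by
      intro j hj j' hj' hne hc
      have h1 : (S.filter fun k => c k = c j).card ≤ S.card / 2 := hcap (c j)
      have hj2 : j ∈ S.filter fun k => c k = c j := by simp [hj]
      have hj'2 : j' ∈ S.filter fun k => c k = c j := by simp [hj', hc]
      have h2' : 2 ≤ (S.filter fun k => c k = c j).card :=
        one_lt_card.mpr ⟨j, hj2, j', hj'2, hne⟩
      omega
    refine ⟨{S}, by simp, by simp, ?_, ?_, ?_⟩
    · intro K hK
      simp only [mem_singleton] at hK; subst hK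
      exact ⟨by omega, hdist⟩
    · simp only [filter_singleton]
      split <;> simp
    · rintro ⟨K, hK, hK3⟩
      simp only [mem_singleton] at hK; subst hK
      rw [Nat.odd_iff]; omega
  · -- inductive step: n ≥ 4
    have hS0 : S.Nonempty := card_pos.mp (by omega)
    obtain ⟨x, hx, hxmax⟩ :=
      S.exists_max_image (fun j => (S.filter fun k => c k = c j).card) hS0
    have hTne : (S.filter fun j => c j ≠ c x).Nonempty := by
      by_contra h
      rw [not_nonempty_iff_eq_empty, filter_eq_empty_iff] at h
      have heq : S.filter (fun j => c j = c x) = S := by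
        apply filter_true_of_mem
        intro j hj
        have := h hj
        tauto
      have := hcap (c x)
      rw [heq] at this
      omega
    obtain ⟨y, hy, hymax⟩ :=
      (S.filter fun j => c j ≠ c x).exists_max_image
        (fun j => (S.filter fun k => c k = c j).card) hTne
    have hyS : y ∈ S := (mem_filter.mp hy).1
    have hyc : c y ≠ c x := (mem_filter.mp hy).2
    have hxy : y ≠ x := fun h => hyc (by rw [h])
    set S' := (S.erase x).erase y with hS'def
    have hxS' : x ∉ S' := fun h => (notMem_erase x S) (mem_of_mem_erase h)
    have hyS' : y ∉ S' := notMem_erase _ _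
    have hsub : S' ⊆ S := (erase_subset _ _).trans (erase_subset _ _)
    have hcard' : S'.card = n - 2 := by
      rw [hS'def, card_erase_of_mem (mem_erase.mpr ⟨hxy, hyS⟩), card_erase_of_mem hx, hn]
      omega
    -- disjointness of color classes
    have hd : ∀ a b : C, a ≠ b →
        Disjoint (S.filter fun j => c j = a) (S.filter fun j => c j = b) := by
      intro a b hab
      rw [disjoint_left]
      intro z hz1 hz2
      simp only [mem_filter] at hz1 hz2
      exact hab (hz1.2.symm.trans hz2.2)
    have hcount : ∀ c₀ : C, (S'.filter fun j => c j = c₀).card ≤ S'.card / 2 := by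
      intro c₀
      have hfe : S'.filter (fun j => c j = c₀)
          = (((S.filter fun j => c j = c₀).erase x).erase y) := by
        rw [hS'def, filter_erase, filter_erase]
      rw [hcard']
      by_cases hcx : c₀ = c x
      · subst hcx
        have hxm : x ∈ S.filter fun j => c j = c x := by simp [hx]
        have hym : y ∉ (S.filter fun j => c j = c x).erase x := by
          simp only [mem_erase, mem_filter, not_and]
          intro _ _
          exact hyc
        rw [hfe, erase_eq_of_notMem hym, card_erase_of_mem hxm]
        have := hcap (c x)
        have hpos : 1 ≤ (S.filter fun j => c j = c x).card := card_pos.mpr ⟨x, hxm⟩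
        omega
      · by_cases hcy : c₀ = c y
        · subst hcy
          have hym : y ∈ S.filter fun j => c j = c y := by simp [hyS]
          have hxm : x ∉ S.filter fun j => c j = c y := by
            simp only [mem_filter, not_and]
            intro _ h; exact hyc h.symm
          rw [hfe, erase_eq_of_notMem hxm, card_erase_of_mem hym]
          have := hcap (c y)
          have hpos : 1 ≤ (S.filter fun j => c j = c y).card := card_pos.mpr ⟨y, hym⟩
          omega
        · -- untouched color
          have hxm : x ∉ S.filter fun j => c j = c₀ := by
            simp only [mem_filter, not_and]
            intro _ h; exact hcx h.symm
          have hym : y ∉ (S.filter fun j => c j = c₀).erase x := by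
            simp only [mem_erase, mem_filter, not_and]
            intro _ _
            exact fun hcyc => hcy hcyc.symm
          rw [hfe, erase_eq_of_notMem hym, erase_eq_of_notMem hxm]
          rcases (S.filter fun j => c j = c₀).eq_empty_or_nonempty with he | ⟨z, hz⟩
          · rw [he]; simp
          · have hzS : z ∈ S := (mem_filter.mp hz).1
            have hzc : c z = c₀ := (mem_filter.mp hz).2
            have hzT : z ∈ S.filter fun j => c j ≠ c x := by
              simp only [mem_filter]
              exact ⟨hzS, fun h => hcx (hzc.symm.trans h)⟩
            have h1 : (S.filter fun k => c k = c₀).card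
                ≤ (S.filter fun k => c k = c y).card := by
              have := hymax z hzT
              simpa [hzc] using this
            have h2' : (S.filter fun k => c k = c y).card
                ≤ (S.filter fun k => c k = c x).card := hxmax y hyS
            have h3 : (S.filter fun k => c k = c y).card ≤ n / 2 :=
              hn ▸ hcap (c y)
            by_cases hbig : (S.filter fun k => c k = c y).card ≤ n / 2 - 1
            · omega
            · -- sum bound
              have hdd1 := hd (c x) (c y) (fun h => hyc h.symm)
              have hdd2 : Disjoint ((S.filter fun j => c j = c x)
                  ∪ (S.filter fun j => c j = c y)) (S.filter fun j => c j = c₀) := by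
                apply disjoint_union_left.mpr
                exact ⟨(hd (c x) c₀ (fun h => hcx h.symm)),
                  (hd (c y) c₀ (fun h => hcy h.symm))⟩
              have hsum : (S.filter fun k => c k = c x).card
                  + (S.filter fun k => c k = c y).card
                  + (S.filter fun k => c k = c₀).card ≤ n := by
                have hU : ((S.filter fun j => c j = c x)
                    ∪ (S.filter fun j => c j = c y)
                    ∪ (S.filter fun j => c j = c₀)) ⊆ S := by
                  intro a ha
                  simp only [mem_union, mem_filter] at ha
                  tauto
                have hc1 := card_union_of_disjoint hdd2
                have hc2 := card_union_of_disjoint hdd1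
                have := card_le_card hU
                omega
              omega
    obtain ⟨P', hcover, hdisj, hparts, hfil, hodd⟩ :=
      ih (n - 2) (by omega) S' hcard' (by omega) hcount
    have hKsub : ∀ K ∈ P', K ⊆ S' := by
      intro K hK z hz
      rw [← hcover]
      exact mem_biUnion.mpr ⟨K, hK, hz⟩
    have hpair : ({x, y} : Finset X) ∉ P' := by
      intro h
      exact hxS' (hKsub _ h (by simp))
    refine ⟨insert {x, y} P', ?_, ?_, ?_, ?_, ?_⟩
    · rw [biUnion_insert, hcover]
      ext a
      simp only [id, mem_union, mem_insert, mem_singleton, hS'def, mem_erase]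
      constructor
      · rintro ((rfl | rfl) | ⟨_, _, h⟩) <;> first | exact hx | exact hyS | exact h
      · intro h
        by_cases h1 : a = x
        · tauto
        · by_cases h1 : a = y <;> tauto
    · intro K hK K' hK' hne
      rcases mem_insert.mp hK with rfl | hK
      · rcases mem_insert.mp hK' with rfl | hK'
        · exact absurd rfl hne
        · rw [disjoint_left]
          rintro z hz hz'
          have hzS' := hKsub _ hK' hz'
          rcases mem_insert.mp hz with rfl | hz
          · exact hxS' hzS'
          · rw [mem_singleton] at hz; subst hz; exact hyS' hzS'
      · rcases mem_insert.mp hK' with rfl | hK'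
        · rw [disjoint_right]
          rintro z hz hz'
          have hzS' := hKsub _ hK hz'
          rcases mem_insert.mp hz with rfl | hz
          · exact hxS' hzS'
          · rw [mem_singleton] at hz; subst hz; exact hyS' hzS'
        · exact hdisj K hK K' hK' hne
    · intro K hK
      rcases mem_insert.mp hK with rfl | hK
      · constructor
        · left
          rw [card_insert_of_notMem (by simp [Ne.symm hxy]), card_singleton]
        · intro j hj j' hj' hne
          simp only [mem_insert, mem_singleton] at hj hj'
          rcases hj with rfl | rfl <;> rcases hj' with rfl | rfl
          · exact absurd rfl hne
          · exact fun h => hyc h.symm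
          · exact hyc
          · exact absurd rfl hne
      · exact hparts K hK
    · rw [filter_insert]
      have : ¬ ({x, y} : Finset X).card = 3 := by
        rw [card_insert_of_notMem (by simp [Ne.symm hxy]), card_singleton]
        omega
      rw [if_neg this]
      exact hfil
    · rintro ⟨K, hK, hK3⟩
      rcases mem_insert.mp hK with rfl | hK
      · rw [card_insert_of_notMem (by simp [Ne.symm hxy]), card_singleton] at hK3
        omega
      · have := hodd ⟨K, hK, hK3⟩
        rw [hcard', Nat.odd_iff] at this
        rw [hn, Nat.odd_iff]
        omega

/-- A colored set `S` with `|S| ≥ 2` in which every color appears at most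
`⌊|S|/2⌋` times admits a caplet decomposition: a partition into parts of size 2 or 3 with
pairwise distinct colors in each part, at most one part of size 3, and a size-3 part
occurring only if `|S|` is odd. -/
theorem stmt_8 {X C : Type*} [DecidableEq X] [DecidableEq C]
    (S : Finset X) (c : X → C) (hS : 2 ≤ S.card)
    (hcap : ∀ c₀ : C, (S.filter fun j => c j = c₀).card ≤ S.card / 2) :
    ∃ P : Finset (Finset X),
      P.biUnion id = S ∧
      (∀ K ∈ P, ∀ K' ∈ P, K ≠ K' → Disjoint K K') ∧
      (∀ K ∈ P, (K.card = 2 ∨ K.card = 3) ∧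
        ∀ j ∈ K, ∀ j' ∈ K, j ≠ j' → c j ≠ c j') ∧
      (P.filter fun K => K.card = 3).card ≤ 1 ∧
      ((∃ K ∈ P, K.card = 3) → Odd S.card) := by
  exact stmt_8_aux c S.card S rfl hS hcap
end

section
/- Let D be a finite set of points in a metric space, each point assigned a color, and let λ* ≥ 0. Suppose there exists a (1/2)-capped clustering of D of radius λ*, i.e., a set F* ⊆ D and an assignment σ* : D → F* with d(j, σ*(j)) ≤ λ* for all j ∈ D and, for every i ∈ F* and color c₀, at most half of the points assigned to i have color c₀. Let G(2λ*) be the graph on vertex set D with an edge between j and j' if and only if c(j) ≠ c(j') and d(j, j') ≤ 2λ*. Then every connected component C of G(2λ*) admits a caplet decomposition κ(C) such that every caplet K ∈ κ(C) has diameter at most 10λ*, i.e., max_{j,j' ∈ K} d(j,j') ≤ 10λ*. -/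
open scoped Classical

namespace Stmt10

variable {X C : Type*} [DecidableEq X] [DecidableEq C]

noncomputable def cnt (c : X → C) (A : Finset X) (e : C) : ℕ :=
  (A.filter fun x => c x = e).card

lemma cnt_le_card (c : X → C) (A : Finset X) (e : C) : cnt c A e ≤ A.card :=
  Finset.card_filter_le _ _

lemma cnt_erase (c : X → C) (A : Finset X) (x : X) (e : C) :
    cnt c (A.erase x) e =
      if x ∈ A ∧ c x = e then cnt c A e - 1 else cnt c A e := by
  unfold cnt
  rw [Finset.filter_erase]
  by_cases hx : x ∈ A ∧ c x = e
  · rw [if_pos hx, Finset.card_erase_of_mem (Finset.mem_filter.2 ⟨hx.1, hx.2⟩)]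
  · rw [if_neg hx, Finset.erase_eq_of_notMem]
    intro hmem
    exact hx ⟨(Finset.mem_filter.1 hmem).1, (Finset.mem_filter.1 hmem).2⟩

lemma cnt_pos_of_mem (c : X → C) {A : Finset X} {x : X} (hx : x ∈ A) :
    1 ≤ cnt c A (c x) :=
  Finset.card_pos.2 ⟨x, Finset.mem_filter.2 ⟨hx, rfl⟩⟩

lemma cnt_two_le (c : X → C) (A : Finset X) {a b : C} (hab : a ≠ b) :
    cnt c A a + cnt c A b ≤ A.card := by
  unfold cnt
  rw [← Finset.card_union_of_disjoint]
  · exact Finset.card_le_card (Finset.union_subset (Finset.filter_subset _ _) (Finset.filter_subset _ _))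
  · rw [Finset.disjoint_left]
    rintro x hx hx'
    exact hab ((Finset.mem_filter.1 hx).2 ▸ (Finset.mem_filter.1 hx').2 ▸ rfl)

lemma cnt_three_le (c : X → C) (A : Finset X) {a b e : C} (hab : a ≠ b) (hae : a ≠ e)
    (hbe : b ≠ e) : cnt c A a + cnt c A b + cnt c A e ≤ A.card := by
  have h1 : cnt c A a + cnt c A b = cnt c (A.filter fun x => c x = a ∨ c x = b) a +
      cnt c (A.filter fun x => c x = a ∨ c x = b) b := by
    unfold cnt
    rw [Finset.filter_filter, Finset.filter_filter]
    congr 1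
    · congr 1; apply Finset.filter_congr; intro x _; constructor
      · intro hx; exact ⟨Or.inl hx, hx⟩
      · intro hx; exact hx.2
    · congr 1; apply Finset.filter_congr; intro x _; constructor
      · intro hx; exact ⟨Or.inr hx, hx⟩
      · intro hx; exact hx.2
  have h2 : cnt c (A.filter fun x => c x = a ∨ c x = b) a +
      cnt c (A.filter fun x => c x = a ∨ c x = b) b ≤
      (A.filter fun x => c x = a ∨ c x = b).card := cnt_two_le c _ hab
  have h3 : (A.filter fun x => c x = a ∨ c x = b).card + cnt c A e ≤ A.card := by
    unfold cnt
    rw [← Finset.card_union_of_disjoint]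
    · exact Finset.card_le_card (Finset.union_subset (Finset.filter_subset _ _) (Finset.filter_subset _ _))
    · rw [Finset.disjoint_left]
      rintro x hx hx'
      rcases (Finset.mem_filter.1 hx).2 with h | h
      · exact hae (h ▸ (Finset.mem_filter.1 hx').2 ▸ rfl)
      · exact hbe (h ▸ (Finset.mem_filter.1 hx').2 ▸ rfl)
  omega

lemma exists_ne_color (c : X → C) {A : Finset X} {g : C} (h : cnt c A g < A.card) :
    ∃ x ∈ A, c x ≠ g := by
  by_contra hc
  push_neg at hc
  have : A.filter (fun x => c x = g) = A := by
    apply Finset.filter_true_of_mem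
    intro x hx; exact hc x hx
  unfold cnt at h
  rw [this] at h
  exact lt_irrefl _ h

/-- rainbow pair partition, combinatorial -/
def RP (c : X → C) (A : Finset X) (P : Finset (Finset X)) : Prop :=
  P.biUnion id = A ∧ (∀ K ∈ P, ∀ K' ∈ P, K ≠ K' → Disjoint K K') ∧
    ∀ K ∈ P, K.card = 2 ∧ ∀ x ∈ K, ∀ y ∈ K, x ≠ y → c x ≠ c y

lemma RP_subset {c : X → C} {A : Finset X} {P : Finset (Finset X)} (h : RP c A P)
    {K : Finset X} (hK : K ∈ P) : K ⊆ A := by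
  rw [← h.1]
  intro x hx
  exact Finset.mem_biUnion.2 ⟨K, hK, hx⟩

lemma rainbow_pairing (c : X → C) :
    ∀ (N : ℕ) (A : Finset X), A.card ≤ N → (∀ e, 2 * cnt c A e ≤ A.card) →
      Even A.card → ∃ P, RP c A P := by
  intro N
  induction N with
  | zero =>
    intro A hA _ _
    refine ⟨∅, ?_, ?_, ?_⟩
    · simp [Finset.card_eq_zero.1 (Nat.le_zero.1 hA)]
    · simp
    · simp
  | succ N ih =>
    intro A hA hcap heven
    rcases Nat.eq_zero_or_pos A.card with h0 | hpos
    · refine ⟨∅, ?_, ?_, ?_⟩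
      · simp [Finset.card_eq_zero.1 h0]
      · simp
      · simp
    have hA2 : 2 ≤ A.card := by
      rcases heven with ⟨k, hk⟩; omega
    -- pick max color a
    have himg : (A.image c).Nonempty := by
      rw [Finset.image_nonempty]; exact Finset.card_pos.1 hpos
    obtain ⟨a, haimg, hamax⟩ := Finset.exists_max_image (A.image c) (cnt c A) himg
    obtain ⟨u, hu, hcu⟩ := Finset.mem_image.1 haimg
    -- B : points of other colors
    have hlta : cnt c A a < A.card := by
      have h1 := hcap a
      have h2 : 1 ≤ cnt c A a := hcu ▸ cnt_pos_of_mem c hu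
      omega
    obtain ⟨w, hwA, hwa⟩ := exists_ne_color c hlta
    set B := A.filter (fun x => ¬ c x = a) with hB
    have hBne : B.Nonempty := ⟨w, Finset.mem_filter.2 ⟨hwA, hwa⟩⟩
    obtain ⟨b, hbimg, hbmax⟩ := Finset.exists_max_image (B.image c) (cnt c A)
      (by rw [Finset.image_nonempty]; exact hBne)
    obtain ⟨v, hv, hcv⟩ := Finset.mem_image.1 hbimg
    have hvA : v ∈ A := (Finset.mem_filter.1 hv).1
    have hvb : ¬ c v = a := (Finset.mem_filter.1 hv).2
    have hba : b ≠ a := by rw [← hcv]; exact hvb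
    have huv : u ≠ v := by
      intro h; rw [h, hcv] at hcu; exact hba hcu
    set A' := (A.erase u).erase v with hA'
    have hvA1 : v ∈ A.erase u := Finset.mem_erase.2 ⟨fun h => huv h.symm, hvA⟩
    have hcard' : A'.card = A.card - 2 := by
      rw [hA', Finset.card_erase_of_mem hvA1, Finset.card_erase_of_mem hu]; omega
    have hcnt' : ∀ e, cnt c A' e =
        cnt c A e - (if e = a then 1 else 0) - (if e = b then 1 else 0) := by
      intro e
      have h1 : cnt c (A.erase u) e = cnt c A e - (if e = a then 1 else 0) := by
        rw [cnt_erase]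
        by_cases hea : e = a
        · rw [if_pos ⟨hu, by rw [hcu, hea]⟩, if_pos hea]
        · rw [if_neg (show ¬(u ∈ A ∧ c u = e) from fun h => hea (by rw [← h.2, hcu])),
            if_neg hea]
          omega
      have h2 : cnt c A' e = cnt c (A.erase u) e - (if e = b then 1 else 0) := by
        rw [hA', cnt_erase]
        by_cases heb : e = b
        · rw [if_pos ⟨hvA1, by rw [hcv, heb]⟩, if_pos heb]
        · rw [if_neg (show ¬(v ∈ A.erase u ∧ c v = e) from fun h => heb (by rw [← h.2, hcv])),
            if_neg heb]
          omega
      rw [h2, h1]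
    have hcap' : ∀ e, 2 * cnt c A' e ≤ A'.card := by
      intro e
      rw [hcnt' e, hcard']
      have hce := hcap e
      obtain ⟨k, hk⟩ := heven
      by_cases hea : e = a
      · rw [if_pos hea, if_neg (by rw [hea]; exact fun h => hba (h.symm))]
        omega
      by_cases heb : e = b
      · rw [if_neg hea, if_pos heb]
        omega
      rw [if_neg hea, if_neg heb]
      -- e is neither a nor b
      by_cases hpres : 1 ≤ cnt c A e
      · -- e present, so cnt e ≤ cnt b ≤ cnt a
        obtain ⟨x, hx⟩ := Finset.card_pos.1 hpres
        have hxA : x ∈ A := (Finset.mem_filter.1 hx).1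
        have hxe : c x = e := (Finset.mem_filter.1 hx).2
        have hxB : x ∈ B := Finset.mem_filter.2 ⟨hxA, by rw [hxe]; exact hea⟩
        have h1 : cnt c A e ≤ cnt c A b := hbmax e (Finset.mem_image.2 ⟨x, hxB, hxe⟩)
        have h2 : cnt c A e ≤ cnt c A a := hamax e (Finset.mem_image.2 ⟨x, hxA, hxe⟩)
        have h3 : cnt c A a + cnt c A b + cnt c A e ≤ A.card :=
          cnt_three_le c A hba.symm (fun h => hea h.symm) (fun h => heb h.symm)
        omega
      · omega
    -- recurse
    obtain ⟨P', hP'⟩ := ih A' (by omega) hcap' (by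
      rcases heven with ⟨k, hk⟩
      refine ⟨k - 1, by omega⟩)
    refine ⟨insert {u, v} P', ?_, ?_, ?_⟩
    · rw [Finset.biUnion_insert, hP'.1]
      ext x
      simp only [Finset.mem_union, Finset.mem_insert, Finset.mem_singleton, hA',
        Finset.mem_erase, id]
      constructor
      · rintro ((rfl | rfl) | ⟨_, _, hxA⟩) <;> first | exact hu | exact hvA | assumption
      · intro hxA
        by_cases h1 : x = u
        · exact Or.inl (Or.inl h1)
        by_cases h2 : x = v
        · exact Or.inl (Or.inr h2)
        · exact Or.inr ⟨h2, h1, hxA⟩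
    · intro K hK K' hK' hne
      rcases Finset.mem_insert.1 hK with rfl | hK
      · rcases Finset.mem_insert.1 hK' with rfl | hK'
        · exact absurd rfl hne
        · have hsub := RP_subset hP' hK'
          rw [Finset.disjoint_left]
          intro x hx hx'
          have := hsub hx'
          rw [hA'] at this
          rcases Finset.mem_insert.1 hx with rfl | hx
          · exact (Finset.mem_erase.1 (Finset.mem_erase.1 this).2).1 rfl
          · rw [Finset.mem_singleton.1 hx] at this
            exact (Finset.mem_erase.1 this).1 rfl
      · rcases Finset.mem_insert.1 hK' with rfl | hK'
        · have hsub := RP_subset hP' hK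
          rw [Finset.disjoint_left]
          intro x hx hx'
          have := hsub hx
          rw [hA'] at this
          rcases Finset.mem_insert.1 hx' with rfl | hx'
          · exact (Finset.mem_erase.1 (Finset.mem_erase.1 this).2).1 rfl
          · rw [Finset.mem_singleton.1 hx'] at this
            exact (Finset.mem_erase.1 this).1 rfl
        · exact hP'.2.1 K hK K' hK' hne
    · intro K hK
      rcases Finset.mem_insert.1 hK with rfl | hK
      · refine ⟨Finset.card_pair huv, ?_⟩
        intro x hx y hy hxy
        have hx' : x = u ∨ x = v := by simpa using hx
        have hy' : y = u ∨ y = v := by simpa using hy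
        rcases hx' with rfl | rfl <;> rcases hy' with rfl | rfl
        · exact absurd rfl hxy
        · rw [hcu, hcv]; exact fun h => hba h.symm
        · rw [hcu, hcv]; exact hba
        · exact absurd rfl hxy
      · exact hP'.2.2 K hK

lemma cnt_sum_le (c : X → C) (A : Finset X) (s : Finset C) :
    (∑ e ∈ s, cnt c A e) ≤ A.card := by
  unfold cnt
  rw [← Finset.card_biUnion]
  · exact Finset.card_le_card (by
      intro x hx
      rw [Finset.mem_biUnion] at hx
      obtain ⟨e, _, hx⟩ := hx
      exact (Finset.mem_filter.1 hx).1)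
  · intro e he e' he' hee
    rw [Function.onFun, Finset.disjoint_left]
    intro x hx hx'
    exact hee ((Finset.mem_filter.1 hx).2 ▸ (Finset.mem_filter.1 hx').2 ▸ rfl)

lemma cnt_four_le (c : X → C) (A : Finset X) {a b e d : C} (hab : a ≠ b) (hae : a ≠ e)
    (had : a ≠ d) (hbe : b ≠ e) (hbd : b ≠ d) (hed : e ≠ d) :
    cnt c A a + cnt c A b + cnt c A e + cnt c A d ≤ A.card := by
  have := cnt_sum_le c A {a, b, e, d}
  rw [Finset.sum_insert (by simp [hab, hae, had]),
    Finset.sum_insert (by simp [hbe, hbd]),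
    Finset.sum_insert (by simp [hed]), Finset.sum_singleton] at this
  omega

lemma cnt_erase2 (c : X → C) {A : Finset X} {u v : X} (hu : u ∈ A) (hv : v ∈ A)
    (huv : u ≠ v) (e : C) :
    cnt c ((A.erase u).erase v) e =
      cnt c A e - (if c u = e then 1 else 0) - (if c v = e then 1 else 0) := by
  have hv1 : v ∈ A.erase u := Finset.mem_erase.2 ⟨fun h => huv h.symm, hv⟩
  have h1 : cnt c (A.erase u) e = cnt c A e - (if c u = e then 1 else 0) := by
    rw [cnt_erase]
    by_cases hue : c u = e
    · rw [if_pos ⟨hu, hue⟩, if_pos hue]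
    · rw [if_neg (fun h => hue h.2), if_neg hue]; omega
  have h2 : cnt c ((A.erase u).erase v) e =
      cnt c (A.erase u) e - (if c v = e then 1 else 0) := by
    rw [cnt_erase]
    by_cases hve : c v = e
    · rw [if_pos ⟨hv1, hve⟩, if_pos hve]
    · rw [if_neg (fun h => hve h.2), if_neg hve]; omega
  rw [h2, h1]

lemma card_erase2 {A : Finset X} {u v : X} (hu : u ∈ A) (hv : v ∈ A) (huv : u ≠ v) :
    ((A.erase u).erase v).card = A.card - 2 := by
  rw [Finset.card_erase_of_mem (Finset.mem_erase.2 ⟨fun h => huv h.symm, hv⟩),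
    Finset.card_erase_of_mem hu]
  omega

lemma exists_color_point (c : X → C) {A : Finset X} {s : C} (h : 1 ≤ cnt c A s) :
    ∃ x ∈ A, c x = s := by
  obtain ⟨x, hx⟩ := Finset.card_pos.1 h
  exact ⟨x, (Finset.mem_filter.1 hx).1, (Finset.mem_filter.1 hx).2⟩

lemma exists_ne_color_erase (c : X → C) {A : Finset X} {g : C}
    (h : cnt c A g + 1 < A.card) (y : X) : ∃ z ∈ A.erase y, c z ≠ g := by
  have hsum := Finset.card_filter_add_card_filter_not (s := A)
    (p := fun x => c x = g)
  have hNG : 2 ≤ (A.filter fun x => ¬ c x = g).card := by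
    unfold cnt at h; omega
  have : 1 ≤ ((A.filter fun x => ¬ c x = g).erase y).card := by
    have := Finset.pred_card_le_card_erase (s := A.filter fun x => ¬ c x = g) (a := y)
    omega
  obtain ⟨z, hz⟩ := Finset.card_pos.1 this
  have hz1 := Finset.mem_erase.1 hz
  exact ⟨z, Finset.mem_erase.2 ⟨hz1.1, (Finset.mem_filter.1 hz1.2).1⟩,
    (Finset.mem_filter.1 hz1.2).2⟩

lemma cap_erase_of_odd {c : X → C} {A : Finset X} (hodd : ¬ Even A.card)
    (hcap : ∀ e, 2 * cnt c A e ≤ A.card) {x : X} (hx : x ∈ A) :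
    ∀ e, 2 * cnt c (A.erase x) e ≤ (A.erase x).card := by
  intro e
  obtain ⟨m, hm⟩ := Nat.not_even_iff_odd.1 hodd
  rw [cnt_erase, Finset.card_erase_of_mem hx]
  have := hcap e
  by_cases h : x ∈ A ∧ c x = e
  · rw [if_pos h]; omega
  · rw [if_neg h]; omega

/-- Lemma B : odd cluster emits a leftover avoiding any one color. -/
lemma leftover_pairing (c : X → C) {A : Finset X} (hodd : ¬ Even A.card)
    (hcap : ∀ e, 2 * cnt c A e ≤ A.card) (f : C) :
    ∃ z ∈ A, c z ≠ f ∧ ∃ P, RP c (A.erase z) P := by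
  obtain ⟨m, hm⟩ := Nat.not_even_iff_odd.1 hodd
  have hlt : cnt c A f < A.card := by have := hcap f; omega
  obtain ⟨z, hzA, hzf⟩ := exists_ne_color c hlt
  refine ⟨z, hzA, hzf, ?_⟩
  exact rainbow_pairing c (A.erase z).card _ le_rfl (cap_erase_of_odd hodd hcap hzA)
    (by rw [Finset.card_erase_of_mem hzA]; exact ⟨m, by omega⟩)

/-- Lemma D : odd cluster of size ≥ 3 contains a rainbow triple plus pairing. -/
lemma triple_pairing (c : X → C) {A : Finset X} (hodd : ¬ Even A.card)
    (h3 : 3 ≤ A.card) (hcap : ∀ e, 2 * cnt c A e ≤ A.card) :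
    ∃ x ∈ A, ∃ y ∈ A, ∃ z ∈ A, x ≠ y ∧ x ≠ z ∧ y ≠ z ∧
      c x ≠ c y ∧ c x ≠ c z ∧ c y ≠ c z ∧
      ∃ P, RP c (((A.erase x).erase y).erase z) P := by
  obtain ⟨m, hm⟩ := Nat.not_even_iff_odd.1 hodd
  have hpos : 0 < A.card := by omega
  -- top color a
  obtain ⟨a, haimg, hamax⟩ := Finset.exists_max_image (A.image c) (cnt c A)
    (by rw [Finset.image_nonempty]; exact Finset.card_pos.1 hpos)
  obtain ⟨x, hxA, hcx⟩ := Finset.mem_image.1 haimg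
  have hca : 1 ≤ cnt c A a := hcx ▸ cnt_pos_of_mem c hxA
  -- second color b
  set B := A.filter (fun t => ¬ c t = a) with hB
  have hBcard : cnt c A a + B.card = A.card := by
    have := Finset.card_filter_add_card_filter_not (s := A)
      (p := fun t => c t = a)
    unfold cnt; rw [hB]; omega
  have hBne : B.Nonempty := Finset.card_pos.1 (by have := hcap a; omega)
  obtain ⟨b, hbimg, hbmax⟩ := Finset.exists_max_image (B.image c) (cnt c A)
    (by rw [Finset.image_nonempty]; exact hBne)
  obtain ⟨y, hyB, hcy⟩ := Finset.mem_image.1 hbimg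
  have hyA : y ∈ A := (Finset.mem_filter.1 hyB).1
  have hba : b ≠ a := fun h => (Finset.mem_filter.1 hyB).2 (hcy ▸ h ▸ rfl)
  -- third color e
  set B2 := A.filter (fun t => ¬ c t = a ∧ ¬ c t = b) with hB2
  have hB2card : cnt c A a + cnt c A b + B2.card = A.card := by
    have h1 : B2 = B.filter (fun t => ¬ c t = b) := by
      rw [hB2, hB, Finset.filter_filter]
    have h2 := Finset.card_filter_add_card_filter_not (s := B)
      (p := fun t => c t = b)
    have h3' : (B.filter fun t => c t = b).card = cnt c A b := by
      unfold cnt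
      rw [hB, Finset.filter_filter]
      congr 1
      apply Finset.filter_congr
      intro t _
      constructor
      · rintro ⟨h1', h2'⟩; exact h2'
      · intro h'; exact ⟨fun ha' => hba (h' ▸ ha' ▸ rfl), h'⟩
    rw [h1]
    omega
  have hB2ne : B2.Nonempty := by
    apply Finset.card_pos.1
    have h1 := hcap a
    have h2 := hcap b
    omega
  obtain ⟨e, heimg, hemax⟩ := Finset.exists_max_image (B2.image c) (cnt c A)
    (by rw [Finset.image_nonempty]; exact hB2ne)
  obtain ⟨z, hzB2, hcz⟩ := Finset.mem_image.1 heimg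
  have hzA : z ∈ A := (Finset.mem_filter.1 hzB2).1
  have hea : e ≠ a := fun h => (Finset.mem_filter.1 hzB2).2.1 (hcz ▸ h ▸ rfl)
  have heb : e ≠ b := fun h => (Finset.mem_filter.1 hzB2).2.2 (hcz ▸ h ▸ rfl)
  have hxy : x ≠ y := fun h => hba (by rw [← hcy, ← h, hcx])
  have hxz : x ≠ z := fun h => hea (by rw [← hcz, ← h, hcx])
  have hyz : y ≠ z := fun h => heb (by rw [← hcz, ← h, hcy])
  refine ⟨x, hxA, y, hyA, z, hzA, hxy, hxz, hyz,
    by rw [hcx, hcy]; exact fun h => hba h.symm,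
    by rw [hcx, hcz]; exact fun h => hea h.symm,
    by rw [hcy, hcz]; exact fun h => heb h.symm, ?_⟩
  set A3 := ((A.erase x).erase y).erase z with hA3
  have hzxy : z ∈ (A.erase x).erase y :=
    Finset.mem_erase.2 ⟨fun h => hyz h.symm, Finset.mem_erase.2 ⟨fun h => hxz h.symm, hzA⟩⟩
  have hcard3 : A3.card = A.card - 3 := by
    rw [hA3, Finset.card_erase_of_mem hzxy, card_erase2 hxA hyA hxy]
    omega
  have hcnt3 : ∀ d, cnt c A3 d = cnt c A d - (if c x = d then 1 else 0)
      - (if c y = d then 1 else 0) - (if c z = d then 1 else 0) := by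
    intro d
    have h1 : cnt c A3 d = cnt c ((A.erase x).erase y) d
        - (if c z = d then 1 else 0) := by
      rw [hA3, cnt_erase]
      by_cases hzd : c z = d
      · rw [if_pos ⟨hzxy, hzd⟩, if_pos hzd]
      · rw [if_neg (fun h => hzd h.2), if_neg hzd]; omega
    rw [h1, cnt_erase2 c hxA hyA hxy]
  have hcap3 : ∀ d, 2 * cnt c A3 d ≤ A3.card := by
    intro d
    rw [hcnt3 d, hcard3]
    have hcd := hcap d
    by_cases hda : d = a
    · rw [if_pos (hda ▸ hcx), if_neg (by rw [hcy, hda]; exact hba),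
        if_neg (by rw [hcz, hda]; exact hea)]
      omega
    by_cases hdb : d = b
    · rw [if_neg (by rw [hcx, hdb]; exact fun h => hba h.symm), if_pos (hdb ▸ hcy),
        if_neg (by rw [hcz, hdb]; exact heb)]
      have := hcap b
      omega
    by_cases hde : d = e
    · rw [if_neg (by rw [hcx, hde]; exact fun h => hea h.symm),
        if_neg (by rw [hcy, hde]; exact fun h => heb h.symm), if_pos (hde ▸ hcz)]
      have := hcap e
      omega
    · rw [if_neg (by rw [hcx]; exact fun h => hda h.symm),
        if_neg (by rw [hcy]; exact fun h => hdb h.symm),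
        if_neg (by rw [hcz]; exact fun h => hde h.symm)]
      by_cases hpres : 1 ≤ cnt c A d
      · obtain ⟨w, hwA, hwd⟩ := exists_color_point c hpres
        have hwB2 : w ∈ B2 := Finset.mem_filter.2 ⟨hwA,
          by rw [hwd]; exact fun h => hda h, by rw [hwd]; exact fun h => hdb h⟩
        have h1 : cnt c A d ≤ cnt c A e := hemax d (Finset.mem_image.2 ⟨w, hwB2, hwd⟩)
        have h2 : cnt c A d ≤ cnt c A b := hbmax d (Finset.mem_image.2
          ⟨w, Finset.mem_filter.2 ⟨hwA, by rw [hwd]; exact fun h => hda h⟩, hwd⟩)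
        have h3' : cnt c A d ≤ cnt c A a := hamax d (Finset.mem_image.2 ⟨w, hwA, hwd⟩)
        have h4 := cnt_four_le c A hba.symm (fun h => hea h.symm) (fun h => hda h.symm)
          (fun h => heb h.symm) (fun h => hdb h.symm) (fun h => hde h.symm)
        omega
      · omega
  exact rainbow_pairing c A3.card A3 le_rfl hcap3
    (by rw [hcard3]; exact ⟨m - 1, by omega⟩)

/-- helper: cap after removing y,z from an even capped set, given every
saturated color is hit. -/
lemma cap_after_two (c : X → C) {A : Finset X} (heven : Even A.card)
    (hcap : ∀ e, 2 * cnt c A e ≤ A.card) {y z : X} (hy : y ∈ A) (hz : z ∈ A)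
    (hyz : y ≠ z)
    (hsat : ∀ d, 2 * cnt c A d = A.card → c y = d ∨ c z = d) :
    ∀ d, 2 * cnt c ((A.erase y).erase z) d ≤ ((A.erase y).erase z).card := by
  intro d
  obtain ⟨k, hk⟩ := heven
  rw [cnt_erase2 c hy hz hyz, card_erase2 hy hz hyz]
  have hcd := hcap d
  by_cases hsd : 2 * cnt c A d = A.card
  · rcases hsat d hsd with h | h
    · rw [if_pos h]
      by_cases h2 : c z = d
      · rw [if_pos h2]; omega
      · rw [if_neg h2]; omega
    · by_cases h1 : c y = d
      · rw [if_pos h1, if_pos h]; omega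
      · rw [if_neg h1, if_pos h]; omega
  · have : 2 * cnt c A d ≤ A.card - 2 := by omega
    by_cases h1 : c y = d <;> by_cases h2 : c z = d <;>
      simp only [h1, h2, if_true, if_false, if_pos, if_neg, not_false_iff] <;> omega

/-- Lemma C : even cluster can consume one external point (of any color avoiding
`Fc`) and emit a leftover avoiding `f`. -/
lemma consume_pairing (c : X → C) {A : Finset X} (heven : Even A.card)
    (hpos : 0 < A.card) (hcap : ∀ e, 2 * cnt c A e ≤ A.card) (f : C) :
    ∃ Fc : C, ∀ g : C, g ≠ Fc → ∃ y ∈ A, ∃ z ∈ A, y ≠ z ∧ c y ≠ g ∧ c z ≠ f ∧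
      ∃ P, RP c ((A.erase y).erase z) P := by
  obtain ⟨k, hk⟩ := heven
  have hA2 : 2 ≤ A.card := by
    rcases Nat.lt_or_ge A.card 2 with h | h
    · interval_cases h' : A.card <;> omega
    · exact h
  have heven' : Even A.card := ⟨k, hk⟩
  have hfin : ∀ (y) (z), y ∈ A → z ∈ A → y ≠ z →
      (∀ d, 2 * cnt c A d = A.card → c y = d ∨ c z = d) →
      ∃ P, RP c ((A.erase y).erase z) P := by
    intro y z hy hz hyz hsat
    exact rainbow_pairing c _ _ le_rfl (cap_after_two c heven' hcap hy hz hyz hsat)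
      (by rw [card_erase2 hy hz hyz]; exact ⟨k - 1, by omega⟩)
  have hsat_mem : ∀ d, 2 * cnt c A d = A.card → 1 ≤ cnt c A d := by
    intro d hd; omega
  by_cases hsat2 : ∃ s₁ s₂, s₁ ≠ s₂ ∧ 2 * cnt c A s₁ = A.card ∧ 2 * cnt c A s₂ = A.card
  · -- two saturated colors: all points colored s₁ or s₂
    obtain ⟨s₁, s₂, hs12, hsa, hsb⟩ := hsat2
    have hall : ∀ x ∈ A, c x = s₁ ∨ c x = s₂ := by
      intro x hx
      by_contra hcon
      push_neg at hcon
      have h1 : 1 ≤ cnt c A (c x) := cnt_pos_of_mem c hx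
      have h3 := cnt_three_le c A hs12 (fun h => hcon.1 h.symm) (fun h => hcon.2 h.symm)
      omega
    have hsatd : ∀ d, 2 * cnt c A d = A.card → d = s₁ ∨ d = s₂ := by
      intro d hd
      obtain ⟨w, hwA, hwd⟩ := exists_color_point c (hsat_mem d hd)
      rcases hall w hwA with h | h
      · exact Or.inl (hwd ▸ h)
      · exact Or.inr (hwd ▸ h)
    obtain ⟨y₁, hy₁A, hy₁⟩ := exists_color_point c (hsat_mem s₁ hsa)
    obtain ⟨y₂, hy₂A, hy₂⟩ := exists_color_point c (hsat_mem s₂ hsb)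
    have hne : y₁ ≠ y₂ := fun h => hs12 (by rw [← hy₁, h, hy₂])
    refine ⟨if f = s₁ then s₁ else s₂, ?_⟩
    intro g hg
    by_cases hf : f = s₁
    · rw [if_pos hf] at hg
      refine ⟨y₁, hy₁A, y₂, hy₂A, hne, by rw [hy₁]; exact fun h => hg h.symm,
        by rw [hy₂, hf]; exact fun h => hs12 h.symm, ?_⟩
      refine hfin y₁ y₂ hy₁A hy₂A hne ?_
      intro d hd
      rcases hsatd d hd with rfl | rfl
      · exact Or.inl hy₁
      · exact Or.inr hy₂
    · rw [if_neg hf] at hg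
      refine ⟨y₂, hy₂A, y₁, hy₁A, fun h => hne h.symm,
        by rw [hy₂]; exact fun h => hg h.symm,
        by rw [hy₁]; exact fun h => hf h.symm, ?_⟩
      refine hfin y₂ y₁ hy₂A hy₁A (fun h => hne h.symm) ?_
      intro d hd
      rcases hsatd d hd with rfl | rfl
      · exact Or.inr hy₁
      · exact Or.inl hy₂
  · -- at most one saturated color
    have h4 : 4 ≤ A.card := by
      by_contra h4
      have hc2 : A.card = 2 := by omega
      obtain ⟨u, hu, v, hv, huv⟩ := Finset.one_lt_card.1 (show 1 < A.card by omega)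
      have hcc : c u ≠ c v := by
        intro h
        have hsub : ({u, v} : Finset X) ⊆ A.filter (fun x => c x = c u) := by
          intro t ht
          rcases Finset.mem_insert.1 ht with rfl | ht
          · exact Finset.mem_filter.2 ⟨hu, rfl⟩
          · rw [Finset.mem_singleton.1 ht]
            exact Finset.mem_filter.2 ⟨hv, h.symm⟩
        have h2 : 2 ≤ cnt c A (c u) := by
          have := Finset.card_le_card hsub
          rw [Finset.card_pair huv] at this
          exact this
        have := hcap (c u)
        omega
      have hcu1 : 2 * cnt c A (c u) = A.card := by
        have h1 : 1 ≤ cnt c A (c u) := cnt_pos_of_mem c hu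
        have := hcap (c u)
        omega
      have hcv1 : 2 * cnt c A (c v) = A.card := by
        have h1 : 1 ≤ cnt c A (c v) := cnt_pos_of_mem c hv
        have := hcap (c v)
        omega
      exact hsat2 ⟨c u, c v, hcc, hcu1, hcv1⟩
    have hk2 : 2 ≤ k := by omega
    by_cases hsat1 : ∃ s, 2 * cnt c A s = A.card
    · -- exactly one saturated color s
      obtain ⟨s, hs⟩ := hsat1
      have huniq : ∀ d, 2 * cnt c A d = A.card → d = s := by
        intro d hd
        by_contra hds
        exact hsat2 ⟨d, s, hds, hd, hs⟩
      obtain ⟨ys, hysA, hys⟩ := exists_color_point c (hsat_mem s hs)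
      refine ⟨s, ?_⟩
      intro g hg
      by_cases hf : f = s
      · -- y := s-point, z := non-s point
        obtain ⟨z, hz, hzs⟩ := exists_ne_color_erase c
          (show cnt c A s + 1 < A.card by omega) ys
        have hzA : z ∈ A := (Finset.mem_erase.1 hz).2
        have hzys : ys ≠ z := fun h => (Finset.mem_erase.1 hz).1 h.symm
        refine ⟨ys, hysA, z, hzA, hzys, by rw [hys]; exact fun h => hg h.symm,
          by rw [hf]; exact hzs, ?_⟩
        refine hfin ys z hysA hzA hzys ?_
        intro d hd
        exact Or.inl (by rw [hys, huniq d hd])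
      · -- z := s-point, y := non-g point
        have hglt : cnt c A g + 1 < A.card := by
          have := hcap g
          have : cnt c A g ≤ k := by omega
          omega
        obtain ⟨y, hy, hyg⟩ := exists_ne_color_erase c hglt ys
        have hyA : y ∈ A := (Finset.mem_erase.1 hy).2
        have hyys : y ≠ ys := (Finset.mem_erase.1 hy).1
        refine ⟨y, hyA, ys, hysA, hyys, hyg,
          by rw [hys]; exact fun h => hf h.symm, ?_⟩
        refine hfin y ys hyA hysA hyys ?_
        intro d hd
        exact Or.inr (by rw [hys, huniq d hd])
    · -- no saturated color
      push_neg at hsat1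
      refine ⟨f, ?_⟩
      intro g hg
      have hgc : cnt c A g < A.card := by
        have := hcap g; omega
      obtain ⟨y, hyA, hyg⟩ := exists_ne_color c hgc
      have hflt : cnt c A f + 1 < A.card := by
        have h1 := hcap f
        have h2 := hsat1 f
        omega
      obtain ⟨z, hz, hzf⟩ := exists_ne_color_erase c hflt y
      have hzA : z ∈ A := (Finset.mem_erase.1 hz).2
      have hyz : y ≠ z := fun h => (Finset.mem_erase.1 hz).1 h.symm
      refine ⟨y, hyA, z, hzA, hyz, hyg, hzf, ?_⟩
      refine hfin y z hyA hzA hyz ?_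
      intro d hd
      exact absurd hd (hsat1 d)

section Metric

variable [MetricSpace X]

/-- pair partition with metric bound -/
def PP (lam : ℝ) (c : X → C) (A : Finset X) (P : Finset (Finset X)) : Prop :=
  P.biUnion id = A ∧ (∀ K ∈ P, ∀ K' ∈ P, K ≠ K' → Disjoint K K') ∧
    ∀ K ∈ P, K.card = 2 ∧ (∀ x ∈ K, ∀ y ∈ K, x ≠ y → c x ≠ c y) ∧
      ∀ x ∈ K, ∀ y ∈ K, dist x y ≤ 10 * lam

lemma PP_subset {lam : ℝ} {c : X → C} {A : Finset X} {P : Finset (Finset X)}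
    (h : PP lam c A P) {K : Finset X} (hK : K ∈ P) : K ⊆ A := by
  rw [← h.1]
  intro x hx
  exact Finset.mem_biUnion.2 ⟨K, hK, hx⟩

lemma RP_to_PP {lam : ℝ} {c : X → C} {A : Finset X} {P : Finset (Finset X)}
    (h : RP c A P) (hd : ∀ x ∈ A, ∀ y ∈ A, dist x y ≤ 10 * lam) : PP lam c A P := by
  refine ⟨h.1, h.2.1, fun K hK => ⟨(h.2.2 K hK).1, (h.2.2 K hK).2, ?_⟩⟩
  intro x hx y hy
  exact hd x (RP_subset h hK hx) y (RP_subset h hK hy)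

lemma PP_union {lam : ℝ} {c : X → C} {A B : Finset X} {P₁ P₂ : Finset (Finset X)}
    (h₁ : PP lam c A P₁) (h₂ : PP lam c B P₂) (hAB : Disjoint A B) :
    PP lam c (A ∪ B) (P₁ ∪ P₂) := by
  refine ⟨?_, ?_, ?_⟩
  · ext x
    simp only [Finset.mem_biUnion, Finset.mem_union, id]
    constructor
    · rintro ⟨K, hK | hK, hx⟩
      · exact Or.inl (by rw [← h₁.1]; exact Finset.mem_biUnion.2 ⟨K, hK, hx⟩)
      · exact Or.inr (by rw [← h₂.1]; exact Finset.mem_biUnion.2 ⟨K, hK, hx⟩)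
    · rintro (hx | hx)
      · rw [← h₁.1] at hx
        obtain ⟨K, hK, hx⟩ := Finset.mem_biUnion.1 hx
        exact ⟨K, Or.inl hK, hx⟩
      · rw [← h₂.1] at hx
        obtain ⟨K, hK, hx⟩ := Finset.mem_biUnion.1 hx
        exact ⟨K, Or.inr hK, hx⟩
  · intro K hK K' hK' hne
    rcases Finset.mem_union.1 hK with hK | hK <;> rcases Finset.mem_union.1 hK' with hK' | hK'
    · exact h₁.2.1 K hK K' hK' hne
    · exact Finset.disjoint_of_subset_left (PP_subset h₁ hK)
        (Finset.disjoint_of_subset_right (PP_subset h₂ hK') hAB)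
    · exact Finset.disjoint_of_subset_left (PP_subset h₂ hK)
        (Finset.disjoint_of_subset_right (PP_subset h₁ hK') hAB.symm)
    · exact h₂.2.1 K hK K' hK' hne
  · intro K hK
    rcases Finset.mem_union.1 hK with hK | hK
    · exact h₁.2.2 K hK
    · exact h₂.2.2 K hK

lemma PP_pair {lam : ℝ} {c : X → C} (hlam : 0 ≤ lam) {u v : X} (huv : u ≠ v)
    (hc : c u ≠ c v)
    (hd : dist u v ≤ 10 * lam) : PP lam c {u, v} {({u, v} : Finset X)} := by
  refine ⟨by simp, by simp, ?_⟩
  intro K hK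
  rw [Finset.mem_singleton] at hK
  subst hK
  refine ⟨Finset.card_pair huv, ?_, ?_⟩
  · intro x hx y hy hxy
    have hx' : x = u ∨ x = v := by simpa using hx
    have hy' : y = u ∨ y = v := by simpa using hy
    rcases hx' with rfl | rfl <;> rcases hy' with rfl | rfl
    · exact absurd rfl hxy
    · exact hc
    · exact fun h => hc h.symm
    · exact absurd rfl hxy
  · intro x hx y hy
    have hx' : x = u ∨ x = v := by simpa using hx
    have hy' : y = u ∨ y = v := by simpa using hy
    rcases hx' with rfl | rfl <;> rcases hy' with rfl | rfl
    · rw [dist_self]; linarith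
    · exact hd
    · rw [dist_comm]; exact hd
    · rw [dist_self]; linarith
  
/-- adjacency of clusters -/
def Adj (lam : ℝ) (Q : X → Finset X) (i j : X) : Prop :=
  i ≠ j ∧ ∃ u ∈ Q i, ∃ v ∈ Q j, dist u v ≤ 2 * lam

lemma Adj.symm' {lam : ℝ} {Q : X → Finset X} {i j : X} (h : Adj lam Q i j) :
    Adj lam Q j i := by
  obtain ⟨hne, u, hu, v, hv, hd⟩ := h
  exact ⟨hne.symm, v, hv, u, hu, by rwa [dist_comm]⟩

def Rel (lam : ℝ) (Q : X → Finset X) (S : Finset X) (u v : X) : Prop :=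
  u ∈ S ∧ v ∈ S ∧ Adj lam Q u v

lemma Rel.symm' {lam : ℝ} {Q : X → Finset X} {S : Finset X} {u v : X}
    (h : Rel lam Q S u v) : Rel lam Q S v u := ⟨h.2.1, h.1, h.2.2.symm'⟩

def Conn (lam : ℝ) (Q : X → Finset X) (S : Finset X) : Prop :=
  ∀ a ∈ S, ∀ b ∈ S, Relation.ReflTransGen (Rel lam Q S) a b

def pts (Q : X → Finset X) (S : Finset X) : Finset X := S.biUnion Q

lemma split (lam : ℝ) (Q : X → Finset X) (S : Finset X) (hS : Conn lam Q S)
    (r : X) (hr : r ∈ S) (h2 : 2 ≤ S.card) :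
    ∃ T t, T ⊆ S ∧ T.Nonempty ∧ r ∉ T ∧ t ∈ T ∧ Adj lam Q r t ∧
      Conn lam Q T ∧ Conn lam Q (S \ T) ∧ r ∈ S \ T := by
  obtain ⟨a₀, ha₀, b₀, hb₀, hab₀⟩ := Finset.one_lt_card.1 (show 1 < S.card by omega)
  have hex : ∃ b ∈ S, b ≠ r := by
    by_cases h : a₀ = r
    · exact ⟨b₀, hb₀, fun hh => hab₀ (h ▸ hh ▸ rfl)⟩
    · exact ⟨a₀, ha₀, h⟩
  obtain ⟨b, hb, hbr⟩ := hex
  have hreach := hS r hr b hb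
  rcases hreach.cases_head with h | ⟨t, hrt, _⟩
  · exact absurd h.symm hbr
  have htS : t ∈ S := hrt.2.1
  have hrtne : r ≠ t := hrt.2.2.1
  set S' := S.erase r with hS'
  have htS' : t ∈ S' := Finset.mem_erase.2 ⟨fun h => hrtne h.symm, htS⟩
  set T := S'.filter (fun v => Relation.ReflTransGen (Rel lam Q S') t v) with hT
  have hTsub' : T ⊆ S' := Finset.filter_subset _ _
  have hTsub : T ⊆ S := hTsub'.trans (Finset.erase_subset _ _)
  have htT : t ∈ T := Finset.mem_filter.2 ⟨htS', Relation.ReflTransGen.refl⟩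
  have hrT : r ∉ T := fun h => (Finset.mem_erase.1 (hTsub' h)).1 rfl
  have hclose : ∀ u v, u ∈ T → Rel lam Q S' u v → v ∈ T := by
    intro u v hu huv
    refine Finset.mem_filter.2 ⟨huv.2.1, ?_⟩
    exact ((Finset.mem_filter.1 hu).2).tail huv
  have hcloseS : ∀ u v, u ∈ T → v ∈ S → v ≠ r → Adj lam Q u v → v ∈ T := by
    intro u v hu hv hvr hadj
    exact hclose u v hu ⟨hTsub' hu, Finset.mem_erase.2 ⟨hvr, hv⟩, hadj⟩
  have hpathT : ∀ a d : X, Relation.ReflTransGen (Rel lam Q S') a d → a ∈ T →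
      Relation.ReflTransGen (Rel lam Q T) a d := by
    intro a d had
    induction had using Relation.ReflTransGen.head_induction_on with
    | refl => intro _; exact Relation.ReflTransGen.refl
    | @head a' u' h' hrest ih =>
      intro ha
      have huT : u' ∈ T := hclose a' u' ha h'
      exact Relation.ReflTransGen.head ⟨ha, huT, h'.2.2⟩ (ih huT)
  have hconnT : Conn lam Q T := by
    intro a haT b hbT
    have h1 : Relation.ReflTransGen (Rel lam Q S') t a := (Finset.mem_filter.1 haT).2
    have h2 : Relation.ReflTransGen (Rel lam Q S') t b := (Finset.mem_filter.1 hbT).2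
    have h1' : Relation.ReflTransGen (Rel lam Q S') a t :=
      by haveI : Std.Symm (Rel lam Q S') := ⟨fun _ _ h => Rel.symm' h⟩; exact _root_.symm h1
    exact hpathT a b (h1'.trans h2) haT
  have hproj : ∀ a b', Relation.ReflTransGen (Rel lam Q S) a b' → b' ∉ T →
      Relation.ReflTransGen (Rel lam Q (S \ T)) (if a ∈ T then r else a) b' := by
    intro a b' h
    induction h using Relation.ReflTransGen.head_induction_on with
    | refl =>
      intro hb'
      rw [if_neg hb']
    | @head a' u' h' hrest ih =>
      intro hb'
      have ihu := ih hb'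
      by_cases haT : a' ∈ T
      · by_cases huT : u' ∈ T
        · rw [if_pos haT]; rw [if_pos huT] at ihu; exact ihu
        · have hur : u' = r := by
            by_contra hur
            exact huT (hcloseS a' u' haT h'.2.1 hur h'.2.2)
          rw [if_pos haT]; rw [if_neg huT] at ihu
          exact hur ▸ ihu
      · by_cases huT : u' ∈ T
        · have har : a' = r := by
            by_contra har
            exact haT (hcloseS u' a' huT h'.1 har h'.2.2.symm')
          rw [if_neg haT, har]; rw [if_pos huT] at ihu; exact ihu
        · rw [if_neg haT]; rw [if_neg huT] at ihu
          exact Relation.ReflTransGen.head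
            ⟨Finset.mem_sdiff.2 ⟨h'.1, haT⟩, Finset.mem_sdiff.2 ⟨h'.2.1, huT⟩, h'.2.2⟩ ihu
  have hconnST : Conn lam Q (S \ T) := by
    intro a ha b hb
    have haS := (Finset.mem_sdiff.1 ha).1
    have hbS := (Finset.mem_sdiff.1 hb).1
    have := hproj a b (hS a haS b hbS) (Finset.mem_sdiff.1 hb).2
    rwa [if_neg (Finset.mem_sdiff.1 ha).2] at this
  exact ⟨T, t, hTsub, ⟨t, htT⟩, hrT, htT, hrt.2.2, hconnT, hconnST,
    Finset.mem_sdiff.2 ⟨hr, hrT⟩⟩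

lemma union_erase_pair {A B : Finset X} {a b : X} (ha : a ∈ A) (hb : b ∈ B)
    (hbA : b ∉ A) : (A.erase a ∪ B.erase b) ∪ {a, b} = A ∪ B := by
  ext x
  simp only [Finset.mem_union, Finset.mem_erase, Finset.mem_insert, Finset.mem_singleton]
  constructor
  · rintro ((⟨_, h⟩ | ⟨_, h⟩) | (rfl | rfl))
    exacts [Or.inl h, Or.inr h, Or.inl ha, Or.inr hb]
  · rintro (h | h)
    · by_cases hxa : x = a
      · exact Or.inr (Or.inl hxa)
      · exact Or.inl (Or.inl ⟨hxa, h⟩)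
    · by_cases hxb : x = b
      · exact Or.inr (Or.inr hxb)
      · exact Or.inl (Or.inr ⟨hxb, h⟩)

lemma union_insert_erase {A B : Finset X} {p z : X} (hz : z ∉ A) :
    A ∪ (insert p B).erase z = (insert p (A ∪ B)).erase z := by
  ext x
  simp only [Finset.mem_union, Finset.mem_erase, Finset.mem_insert]
  constructor
  · rintro (h | ⟨hxz, (rfl | h)⟩)
    · exact ⟨fun hh => hz (hh ▸ h), Or.inr (Or.inl h)⟩
    · exact ⟨hxz, Or.inl rfl⟩
    · exact ⟨hxz, Or.inr (Or.inr h)⟩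
  · rintro ⟨hxz, (rfl | h | h)⟩
    · exact Or.inr ⟨hxz, Or.inl rfl⟩
    · exact Or.inl h
    · exact Or.inr ⟨hxz, Or.inr h⟩

lemma erase2_union_pair {A B : Finset X} {p z'' z : X} (hz'' : z'' ∈ A) (hz : z ∈ B)
    (hzA : z ∉ A) (hpz : p ≠ z) (hzz : z'' ≠ z) :
    (A.erase z'' ∪ B.erase z) ∪ {p, z''} = (insert p (A ∪ B)).erase z := by
  ext x
  simp only [Finset.mem_union, Finset.mem_erase, Finset.mem_insert, Finset.mem_singleton]
  constructor
  · rintro ((⟨_, h⟩ | ⟨hxz, h⟩) | (rfl | rfl))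
    · exact ⟨fun hh => hzA (hh ▸ h), Or.inr (Or.inl h)⟩
    · exact ⟨hxz, Or.inr (Or.inr h)⟩
    · exact ⟨hpz, Or.inl rfl⟩
    · exact ⟨hzz, Or.inr (Or.inl hz'')⟩
  · rintro ⟨hxz, (rfl | h | h)⟩
    · exact Or.inr (Or.inl rfl)
    · by_cases hx : x = z''
      · exact Or.inr (Or.inr hx)
      · exact Or.inl (Or.inl ⟨hx, h⟩)
    · exact Or.inl (Or.inr ⟨hxz, h⟩)

lemma union_erase_right {A B : Finset X} {z : X} (hz : z ∉ A) :
    A ∪ B.erase z = (A ∪ B).erase z := by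
  ext x
  simp only [Finset.mem_union, Finset.mem_erase]
  constructor
  · rintro (h | ⟨hxz, h⟩)
    · exact ⟨fun hh => hz (hh ▸ h), Or.inl h⟩
    · exact ⟨hxz, Or.inr h⟩
  · rintro ⟨hxz, (h | h)⟩
    · exact Or.inl h
    · exact Or.inr ⟨hxz, h⟩

lemma erase_union_insert_erase {A B : Finset X} {z' z : X} (hz' : z' ∈ A)
    (hzA : z ∉ A) :
    (A.erase z' ∪ (insert z' B).erase z) = (A ∪ B).erase z := by
  ext x
  simp only [Finset.mem_union, Finset.mem_erase, Finset.mem_insert]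
  constructor
  · rintro (⟨_, h⟩ | ⟨hxz, (rfl | h)⟩)
    · exact ⟨fun hh => hzA (hh ▸ h), Or.inl h⟩
    · exact ⟨hxz, Or.inl hz'⟩
    · exact ⟨hxz, Or.inr h⟩
  · rintro ⟨hxz, (h | h)⟩
    · by_cases hx : x = z'
      · exact Or.inr ⟨hxz, Or.inl hx⟩
      · exact Or.inl ⟨hx, h⟩
    · exact Or.inr ⟨hxz, Or.inr h⟩

lemma union_sdiff_right {A B K : Finset X} (hK : Disjoint A K) :
    A ∪ (B \ K) = (A ∪ B) \ K := by
  ext x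
  simp only [Finset.mem_union, Finset.mem_sdiff]
  constructor
  · rintro (h | ⟨h, hk⟩)
    · exact ⟨Or.inl h, fun hh => (Finset.disjoint_left.1 hK) h hh⟩
    · exact ⟨Or.inr h, hk⟩
  · rintro ⟨(h | h), hk⟩
    · exact Or.inl h
    · exact Or.inr ⟨h, hk⟩

lemma sdiff_union_right {A B K : Finset X} (hK : Disjoint B K) :
    (A \ K) ∪ B = (A ∪ B) \ K := by
  ext x
  simp only [Finset.mem_union, Finset.mem_sdiff]
  constructor
  · rintro (⟨h, hk⟩ | h)
    · exact ⟨Or.inl h, hk⟩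
    · exact ⟨Or.inr h, fun hh => (Finset.disjoint_left.1 hK) h hh⟩
  · rintro ⟨(h | h), hk⟩
    · exact Or.inl ⟨h, hk⟩
    · exact Or.inr h

lemma pts_union (Q : X → Finset X) (T R : Finset X) :
    pts Q (T ∪ R) = pts Q T ∪ pts Q R := by
  ext x
  simp only [pts, Finset.mem_biUnion, Finset.mem_union]
  constructor
  · rintro ⟨i, (hi | hi), hx⟩
    · exact Or.inl ⟨i, hi, hx⟩
    · exact Or.inr ⟨i, hi, hx⟩
  · rintro (⟨i, hi, hx⟩ | ⟨i, hi, hx⟩)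
    · exact ⟨i, Or.inl hi, hx⟩
    · exact ⟨i, Or.inr hi, hx⟩

theorem main (lam : ℝ) (hlam : 0 ≤ lam) (c : X → C) (Q : X → Finset X) :
    ∀ (N : ℕ) (S : Finset X), S.card ≤ N → S.Nonempty →
    (∀ i ∈ S, 2 ≤ (Q i).card) →
    (∀ i ∈ S, ∀ e, 2 * cnt c (Q i) e ≤ (Q i).card) →
    (∀ i ∈ S, ∀ u ∈ Q i, ∀ v ∈ Q i, dist u v ≤ 2 * lam) →
    (∀ i ∈ S, ∀ j ∈ S, i ≠ j → Disjoint (Q i) (Q j)) →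
    Conn lam Q S →
    ∀ r, r ∈ S →
    ((Even (pts Q S).card →
        (∃ P, PP lam c (pts Q S) P) ∧
        (∀ f : C, ∃ Fc : C, ∀ p, p ∉ pts Q S → c p ≠ Fc →
          (∀ u ∈ Q r, dist p u ≤ 6 * lam) →
          ∃ z P, z ∈ Q r ∧ c z ≠ f ∧ PP lam c ((insert p (pts Q S)).erase z) P))
     ∧ (¬ Even (pts Q S).card →
        (∀ f : C, ∃ z P, z ∈ Q r ∧ c z ≠ f ∧ PP lam c ((pts Q S).erase z) P) ∧
        (∃ K₃ P, K₃ ⊆ pts Q S ∧ K₃.card = 3 ∧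
          (∀ x ∈ K₃, ∀ y ∈ K₃, x ≠ y → c x ≠ c y) ∧
          (∀ x ∈ K₃, ∀ y ∈ K₃, dist x y ≤ 10 * lam) ∧
          PP lam c ((pts Q S) \ K₃) P))) := by
  intro N
  induction N with
  | zero =>
    intro S hcard hne
    obtain ⟨x, hx⟩ := hne
    have := Finset.card_pos.2 ⟨x, hx⟩
    omega
  | succ N ih =>
    intro S hcard hne H1 H2 H3 H4 hconn r hr
    by_cases hbase : S.card = 1
    · -- base case : S = {r}
      obtain ⟨a, ha⟩ := Finset.card_eq_one.1 hbase
      have hra : r = a := by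
        rw [ha] at hr; exact Finset.mem_singleton.1 hr
      subst hra
      subst ha
      have hpts : pts Q {r} = Q r := Finset.singleton_biUnion
      have hcap := H2 r (Finset.mem_singleton_self r)
      have hA2 := H1 r (Finset.mem_singleton_self r)
      have hdiam : ∀ u ∈ Q r, ∀ v ∈ Q r, dist u v ≤ 2 * lam :=
        H3 r (Finset.mem_singleton_self r)
      have hd10 : ∀ u ∈ Q r, ∀ v ∈ Q r, dist u v ≤ 10 * lam := by
        intro u hu v hv; have := hdiam u hu v hv; linarith
      rw [hpts]
      constructor
      · intro heven
        constructor
        · obtain ⟨P, hP⟩ := rainbow_pairing c (Q r).card (Q r) le_rfl hcap heven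
          exact ⟨P, RP_to_PP hP hd10⟩
        · intro f
          obtain ⟨Fc, hFc⟩ := consume_pairing c heven (by omega) hcap f
          refine ⟨Fc, ?_⟩
          intro p hp hpFc hp6
          obtain ⟨y, hy, z, hz, hyz, hcy, hcz, P, hP⟩ := hFc (c p) hpFc
          have hpy : p ≠ y := fun h => hp (h ▸ hy)
          have hPP : PP lam c ((Q r).erase y |>.erase z) P :=
            RP_to_PP hP (by
              intro x hx w hw
              exact hd10 x (Finset.mem_of_mem_erase (Finset.mem_of_mem_erase hx))
                w (Finset.mem_of_mem_erase (Finset.mem_of_mem_erase hw)))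
          have hpair : PP lam c {p, y} {({p, y} : Finset X)} :=
            PP_pair hlam hpy (fun h => hcy h.symm) (by
              have := hp6 y hy; linarith)
          have hdisj : Disjoint ((Q r).erase y |>.erase z) ({p, y} : Finset X) := by
            rw [Finset.disjoint_right]
            intro x hx hx'
            rcases Finset.mem_insert.1 hx with rfl | hx
            · exact hp (Finset.mem_of_mem_erase (Finset.mem_of_mem_erase hx'))
            · rw [Finset.mem_singleton.1 hx] at hx'
              exact (Finset.mem_erase.1 (Finset.mem_of_mem_erase
                (Finset.mem_erase.2 ⟨(Finset.mem_erase.1 hx').1,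
                  Finset.mem_of_mem_erase hx'⟩))).1 rfl
          have hground : ((Q r).erase y |>.erase z) ∪ {p, y} =
              (insert p (Q r)).erase z := by
            ext x
            simp only [Finset.mem_union, Finset.mem_erase, Finset.mem_insert,
              Finset.mem_singleton]
            constructor
            · rintro (⟨hxz, _, h⟩ | (rfl | rfl))
              · exact ⟨hxz, Or.inr h⟩
              · exact ⟨fun h => hp (h ▸ hz), Or.inl rfl⟩
              · exact ⟨fun h => hyz (h ▸ rfl), Or.inr hy⟩
            · rintro ⟨hxz, (rfl | h)⟩
              · exact Or.inr (Or.inl rfl)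
              · by_cases hxy : x = y
                · exact Or.inr (Or.inr hxy)
                · exact Or.inl ⟨hxz, hxy, h⟩
          have := PP_union hPP hpair hdisj
          rw [hground] at this
          exact ⟨z, _, hz, hcz, this⟩
      · intro hodd
        constructor
        · intro f
          obtain ⟨z, hz, hcz, P, hP⟩ := leftover_pairing c hodd hcap f
          refine ⟨z, P, hz, hcz, RP_to_PP hP ?_⟩
          intro x hx w hw
          exact hd10 x (Finset.mem_of_mem_erase hx) w (Finset.mem_of_mem_erase hw)
        · obtain ⟨x, hx, y, hy, z, hz, hxy, hxz, hyz, hcxy, hcxz, hcyz, P, hP⟩ :=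
            triple_pairing c hodd (by
              rcases Nat.even_or_odd (Q r).card with h | h
              · exact absurd h hodd
              · obtain ⟨m, hm⟩ := h; omega) hcap
          refine ⟨{x, y, z}, P, ?_, ?_, ?_, ?_, ?_⟩
          · intro w hw
            rcases Finset.mem_insert.1 hw with rfl | hw
            · exact hx
            rcases Finset.mem_insert.1 hw with rfl | hw
            · exact hy
            · rw [Finset.mem_singleton.1 hw]; exact hz
          · rw [Finset.card_insert_of_notMem (by
                simp only [Finset.mem_insert, Finset.mem_singleton]
                rintro (rfl | rfl)
                exacts [hxy rfl, hxz rfl]),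
              Finset.card_insert_of_notMem (by
                simp only [Finset.mem_singleton]
                rintro rfl
                exact hyz rfl),
              Finset.card_singleton]
          · intro u hu v hv huv
            have hu' : u = x ∨ u = y ∨ u = z := by simpa using hu
            have hv' : v = x ∨ v = y ∨ v = z := by simpa using hv
            rcases hu' with rfl | rfl | rfl <;> rcases hv' with rfl | rfl | rfl <;>
              first
                | exact absurd rfl huv
                | exact hcxy
                | exact hcxz
                | exact hcyz
                | exact fun h => hcxy h.symm
                | exact fun h => hcxz h.symm
                | exact fun h => hcyz h.symm
          · intro u hu v hv
            have hu' : u ∈ Q r := by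
              have : u = x ∨ u = y ∨ u = z := by simpa using hu
              rcases this with rfl | rfl | rfl <;> assumption
            have hv' : v ∈ Q r := by
              have : v = x ∨ v = y ∨ v = z := by simpa using hv
              rcases this with rfl | rfl | rfl <;> assumption
            exact hd10 u hu' v hv'
          · have hground : Q r \ {x, y, z} = (((Q r).erase x).erase y).erase z := by
              ext w
              simp only [Finset.mem_sdiff, Finset.mem_insert, Finset.mem_singleton,
                Finset.mem_erase]
              constructor
              · rintro ⟨hw, hno⟩
                push_neg at hno
                exact ⟨hno.2.2, hno.2.1, hno.1, hw⟩
              · rintro ⟨h3, h2, h1, hw⟩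
                refine ⟨hw, ?_⟩
                rintro (rfl | rfl | rfl)
                exacts [h1 rfl, h2 rfl, h3 rfl]
            rw [hground]
            refine RP_to_PP hP ?_
            intro u hu v hv
            exact hd10 u (Finset.mem_of_mem_erase (Finset.mem_of_mem_erase
              (Finset.mem_of_mem_erase hu)))
              v (Finset.mem_of_mem_erase (Finset.mem_of_mem_erase
              (Finset.mem_of_mem_erase hv)))
    · -- inductive step
      have h2card : 2 ≤ S.card := by
        have : 1 ≤ S.card := Finset.card_pos.2 hne
        omega
      obtain ⟨T, t, hTsub, hTne, hrT, htT, hAdjrt, hconnT, hconnR, hrR⟩ :=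
        split lam Q S hconn r hr h2card
      have hRsub : S \ T ⊆ S := Finset.sdiff_subset
      have hTcard : T.card ≤ N := by
        have hsub : T ⊆ S.erase r := by
          intro x hx
          exact Finset.mem_erase.2 ⟨fun h => hrT (h ▸ hx), hTsub hx⟩
        have := Finset.card_le_card hsub
        rw [Finset.card_erase_of_mem hr] at this
        omega
      have hRcard : (S \ T).card ≤ N := by
        have h1 : (S \ T).card = S.card - T.card := Finset.card_sdiff_of_subset hTsub
        have h2 : 1 ≤ T.card := Finset.card_pos.2 hTne
        omega
      obtain ⟨ihTE, ihTO⟩ := ih T hTcard hTne (fun i hi => H1 i (hTsub hi))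
        (fun i hi => H2 i (hTsub hi)) (fun i hi => H3 i (hTsub hi))
        (fun i hi j hj hij => H4 i (hTsub hi) j (hTsub hj) hij) hconnT t htT
      obtain ⟨ihRE, ihRO⟩ := ih (S \ T) hRcard ⟨r, hrR⟩ (fun i hi => H1 i (hRsub hi))
        (fun i hi => H2 i (hRsub hi)) (fun i hi => H3 i (hRsub hi))
        (fun i hi j hj hij => H4 i (hRsub hi) j (hRsub hj) hij) hconnR r hrR
      have hdisjTR : Disjoint (pts Q T) (pts Q (S \ T)) := by
        rw [Finset.disjoint_left]
        intro x hx hx'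
        obtain ⟨i, hi, hxi⟩ := Finset.mem_biUnion.1 hx
        obtain ⟨j, hj, hxj⟩ := Finset.mem_biUnion.1 hx'
        have hij : i ≠ j := fun h => (Finset.mem_sdiff.1 hj).2 (h ▸ hi)
        exact (Finset.disjoint_left.1 (H4 i (hTsub hi) j (hRsub hj) hij)) hxi hxj
      have hptsS : pts Q S = pts Q T ∪ pts Q (S \ T) := by
        rw [← pts_union]
        congr 1
        rw [Finset.union_sdiff_of_subset hTsub]
      obtain ⟨hne_rt, u₀, hu₀, v₀, hv₀, he₀⟩ := hAdjrt
      have hd6 : ∀ w ∈ Q t, ∀ u ∈ Q r, dist w u ≤ 6 * lam := by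
        intro w hw u hu
        have h1 := dist_triangle4 w v₀ u₀ u
        have h2 := H3 t (hTsub htT) w hw v₀ hv₀
        have h3 : dist v₀ u₀ ≤ 2 * lam := by rw [dist_comm]; exact he₀
        have h4 := H3 r hr u₀ hu₀ u hu
        linarith
      have hd10 : ∀ p, (∀ u ∈ Q r, dist p u ≤ 6 * lam) →
          ∀ w ∈ Q t, dist p w ≤ 10 * lam := by
        intro p hp w hw
        have h1 := dist_triangle4 p u₀ v₀ w
        have h2 := hp u₀ hu₀
        have h3 := H3 t (hTsub htT) v₀ hv₀ w hw
        linarith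
      have hQr_in : Q r ⊆ pts Q (S \ T) := Finset.subset_biUnion_of_mem Q hrR
      have hQt_in : Q t ⊆ pts Q T := Finset.subset_biUnion_of_mem Q htT
      rw [hptsS]
      constructor
      · -- S even
        intro hSe
        have hSe' : Even ((pts Q T).card + (pts Q (S \ T)).card) := by
          rwa [← Finset.card_union_of_disjoint hdisjTR]
        by_cases hTe : Even (pts Q T).card
        · have hRe : Even (pts Q (S \ T)).card := (Nat.even_add.1 hSe').1 hTe
          constructor
          · obtain ⟨PT, hPT⟩ := (ihTE hTe).1
            obtain ⟨PR, hPR⟩ := (ihRE hRe).1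
            exact ⟨PT ∪ PR, PP_union hPT hPR hdisjTR⟩
          · intro f
            obtain ⟨Fc, hFc⟩ := (ihRE hRe).2 f
            refine ⟨Fc, ?_⟩
            intro p hp hpFc hp6
            have hpR : p ∉ pts Q (S \ T) := fun h => hp (Finset.mem_union.2 (Or.inr h))
            obtain ⟨z, PR, hzQr, hcz, hPR⟩ := hFc p hpR hpFc hp6
            obtain ⟨PT, hPT⟩ := (ihTE hTe).1
            have hzT : z ∉ pts Q T :=
              fun h => (Finset.disjoint_left.1 hdisjTR) h (hQr_in hzQr)
            have hdisj2 : Disjoint (pts Q T) ((insert p (pts Q (S \ T))).erase z) := by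
              rw [Finset.disjoint_left]
              intro x hx hx'
              rcases Finset.mem_insert.1 (Finset.mem_of_mem_erase hx') with rfl | h
              · exact hp (Finset.mem_union.2 (Or.inl hx))
              · exact (Finset.disjoint_left.1 hdisjTR) hx h
            have hfin := PP_union hPT hPR hdisj2
            rw [union_insert_erase hzT] at hfin
            exact ⟨z, PT ∪ PR, hzQr, hcz, hfin⟩
        · have hRo : ¬ Even (pts Q (S \ T)).card :=
            fun hRe => hTe ((Nat.even_add.1 hSe').2 hRe)
          constructor
          · obtain ⟨z', PT, hz'Qt, _, hPT⟩ := (ihTO hTe).1 (c r)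
            obtain ⟨z, PR, hzQr, hcz, hPR⟩ := (ihRO hRo).1 (c z')
            have hz'pts : z' ∈ pts Q T := hQt_in hz'Qt
            have hzpts : z ∈ pts Q (S \ T) := hQr_in hzQr
            have hzz' : z' ≠ z :=
              fun h => (Finset.disjoint_left.1 hdisjTR) hz'pts (h ▸ hzpts)
            have hzT : z ∉ pts Q T :=
              fun h => (Finset.disjoint_left.1 hdisjTR) h hzpts
            have hpair : PP lam c {z', z} {({z', z} : Finset X)} :=
              PP_pair hlam hzz' (fun h => hcz h.symm)
                (by have := hd6 z' hz'Qt z hzQr; linarith)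
            have hd1 : Disjoint ((pts Q T).erase z') ((pts Q (S \ T)).erase z) :=
              Finset.disjoint_of_subset_left (Finset.erase_subset _ _)
                (Finset.disjoint_of_subset_right (Finset.erase_subset _ _) hdisjTR)
            have hd2 : Disjoint ((pts Q T).erase z' ∪ (pts Q (S \ T)).erase z)
                ({z', z} : Finset X) := by
              rw [Finset.disjoint_right]
              intro x hx hx'
              rcases Finset.mem_insert.1 hx with rfl | hx
              · rcases Finset.mem_union.1 hx' with h | h
                · exact (Finset.mem_erase.1 h).1 rfl
                · exact (Finset.disjoint_left.1 hdisjTR) hz'pts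
                    (Finset.mem_of_mem_erase h)
              · rw [Finset.mem_singleton.1 hx] at hx'
                rcases Finset.mem_union.1 hx' with h | h
                · exact hzT (Finset.mem_of_mem_erase h)
                · exact (Finset.mem_erase.1 h).1 rfl
            have hfin := PP_union (PP_union hPT hPR hd1) hpair hd2
            rw [union_erase_pair hz'pts hzpts hzT] at hfin
            exact ⟨(PT ∪ PR) ∪ {({z', z} : Finset X)}, hfin⟩
          · intro f
            refine ⟨f, ?_⟩
            intro p hp _ hp6
            obtain ⟨z'', PT, hz''Qt, hcz'', hPT⟩ := (ihTO hTe).1 (c p)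
            obtain ⟨z, PR, hzQr, hcz, hPR⟩ := (ihRO hRo).1 f
            have hz''pts : z'' ∈ pts Q T := hQt_in hz''Qt
            have hzpts : z ∈ pts Q (S \ T) := hQr_in hzQr
            have hzT : z ∉ pts Q T :=
              fun h => (Finset.disjoint_left.1 hdisjTR) h hzpts
            have hpz'' : p ≠ z'' :=
              fun h => hp (Finset.mem_union.2 (Or.inl (h ▸ hz''pts)))
            have hpz : p ≠ z :=
              fun h => hp (Finset.mem_union.2 (Or.inr (h ▸ hzpts)))
            have hz''z : z'' ≠ z :=
              fun h => (Finset.disjoint_left.1 hdisjTR) hz''pts (h ▸ hzpts)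
            have hpair : PP lam c {p, z''} {({p, z''} : Finset X)} :=
              PP_pair hlam hpz'' (fun h => hcz'' h.symm)
                (hd10 p hp6 z'' hz''Qt)
            have hd1 : Disjoint ((pts Q T).erase z'') ((pts Q (S \ T)).erase z) :=
              Finset.disjoint_of_subset_left (Finset.erase_subset _ _)
                (Finset.disjoint_of_subset_right (Finset.erase_subset _ _) hdisjTR)
            have hd2 : Disjoint ((pts Q T).erase z'' ∪ (pts Q (S \ T)).erase z)
                ({p, z''} : Finset X) := by
              rw [Finset.disjoint_right]
              intro x hx hx'
              rcases Finset.mem_insert.1 hx with rfl | hx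
              · rcases Finset.mem_union.1 hx' with h | h
                · exact hp (Finset.mem_union.2 (Or.inl (Finset.mem_of_mem_erase h)))
                · exact hp (Finset.mem_union.2 (Or.inr (Finset.mem_of_mem_erase h)))
              · rw [Finset.mem_singleton.1 hx] at hx'
                rcases Finset.mem_union.1 hx' with h | h
                · exact (Finset.mem_erase.1 h).1 rfl
                · exact (Finset.disjoint_left.1 hdisjTR) hz''pts
                    (Finset.mem_of_mem_erase h)
            have hfin := PP_union (PP_union hPT hPR hd1) hpair hd2
            rw [erase2_union_pair hz''pts hzpts hzT hpz hz''z] at hfin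
            exact ⟨z, (PT ∪ PR) ∪ {({p, z''} : Finset X)}, hzQr, hcz, hfin⟩
      · -- S odd
        intro hSo
        have hSo' : ¬ Even ((pts Q T).card + (pts Q (S \ T)).card) := by
          rwa [← Finset.card_union_of_disjoint hdisjTR]
        by_cases hTe : Even (pts Q T).card
        · have hRo : ¬ Even (pts Q (S \ T)).card :=
            fun hRe => hSo' (Nat.even_add.2 (iff_of_true hTe hRe))
          constructor
          · intro f
            obtain ⟨z, PR, hzQr, hcz, hPR⟩ := (ihRO hRo).1 f
            obtain ⟨PT, hPT⟩ := (ihTE hTe).1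
            have hzT : z ∉ pts Q T :=
              fun h => (Finset.disjoint_left.1 hdisjTR) h (hQr_in hzQr)
            have hd1 : Disjoint (pts Q T) ((pts Q (S \ T)).erase z) :=
              Finset.disjoint_of_subset_right (Finset.erase_subset _ _) hdisjTR
            have hfin := PP_union hPT hPR hd1
            rw [union_erase_right hzT] at hfin
            exact ⟨z, PT ∪ PR, hzQr, hcz, hfin⟩
          · obtain ⟨K₃, PR, hK3sub, hK3card, hK3c, hK3d, hPR⟩ := (ihRO hRo).2
            obtain ⟨PT, hPT⟩ := (ihTE hTe).1
            have hdK : Disjoint (pts Q T) K₃ :=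
              Finset.disjoint_of_subset_right hK3sub hdisjTR
            have hd1 : Disjoint (pts Q T) (pts Q (S \ T) \ K₃) :=
              Finset.disjoint_of_subset_right (Finset.sdiff_subset) hdisjTR
            have hfin := PP_union hPT hPR hd1
            rw [union_sdiff_right hdK] at hfin
            exact ⟨K₃, PT ∪ PR,
              hK3sub.trans (Finset.subset_union_right), hK3card, hK3c, hK3d, hfin⟩
        · have hRe : Even (pts Q (S \ T)).card := by
            by_contra hRo
            exact hSo' (Nat.even_add.2 (iff_of_false hTe hRo))
          constructor
          · intro f
            obtain ⟨Fc, hFc⟩ := (ihRE hRe).2 f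
            obtain ⟨z', PT, hz'Qt, hcz', hPT⟩ := (ihTO hTe).1 Fc
            have hz'pts : z' ∈ pts Q T := hQt_in hz'Qt
            have hz'R : z' ∉ pts Q (S \ T) :=
              fun h => (Finset.disjoint_left.1 hdisjTR) hz'pts h
            obtain ⟨z, PR, hzQr, hcz, hPR⟩ :=
              hFc z' hz'R hcz' (fun u hu => hd6 z' hz'Qt u hu)
            have hzpts : z ∈ pts Q (S \ T) := hQr_in hzQr
            have hzT : z ∉ pts Q T :=
              fun h => (Finset.disjoint_left.1 hdisjTR) h hzpts
            have hd1 : Disjoint ((pts Q T).erase z')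
                ((insert z' (pts Q (S \ T))).erase z) := by
              rw [Finset.disjoint_left]
              intro x hx hx'
              have hx1 := Finset.mem_erase.1 hx
              rcases Finset.mem_insert.1 (Finset.mem_of_mem_erase hx') with rfl | h
              · exact hx1.1 rfl
              · exact (Finset.disjoint_left.1 hdisjTR) hx1.2 h
            have hfin := PP_union hPT hPR hd1
            rw [erase_union_insert_erase hz'pts hzT] at hfin
            exact ⟨z, PT ∪ PR, hzQr, hcz, hfin⟩
          · obtain ⟨K₃, PT, hK3sub, hK3card, hK3c, hK3d, hPT⟩ := (ihTO hTe).2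
            obtain ⟨PR, hPR⟩ := (ihRE hRe).1
            have hdK : Disjoint (pts Q (S \ T)) K₃ :=
              Finset.disjoint_of_subset_right hK3sub hdisjTR.symm
            have hd1 : Disjoint (pts Q T \ K₃) (pts Q (S \ T)) :=
              Finset.disjoint_of_subset_left (Finset.sdiff_subset) hdisjTR
            have hfin := PP_union hPT hPR hd1
            rw [sdiff_union_right hdK] at hfin
            exact ⟨K₃, PT ∪ PR,
              hK3sub.trans (Finset.subset_union_left), hK3card, hK3c, hK3d, hfin⟩

end Metric

end Stmt10

open Stmt10 in
/-- If a `(1/2)`-capped clustering of `D` of radius `λ*` exists, then every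
connected component of the threshold graph `G(2λ*)` admits a caplet decomposition in which
every caplet has diameter at most `10λ*`. The connected component of `j₀ ∈ D` is the set of
points of `D` reachable from `j₀` in the threshold graph. -/
theorem stmt_10 {X C : Type*} [MetricSpace X] [DecidableEq X] [DecidableEq C]
    (D : Finset X) (c : X → C) (lam : ℝ) (hlam : 0 ≤ lam)
    (h : ∃ (Fs : Finset X) (σ : X → X), Fs ⊆ D ∧
      (∀ j ∈ D, σ j ∈ Fs) ∧ (∀ j ∈ D, dist j (σ j) ≤ lam) ∧
      ∀ i ∈ Fs, ∀ c₀ : C,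
        ((D.filter fun j => σ j = i ∧ c j = c₀).card : ℝ) ≤
          (1 / 2 : ℝ) * ((D.filter fun j => σ j = i).card : ℝ))
    (G : SimpleGraph X)
    (hG : ∀ j j', G.Adj j j' ↔ (j ∈ D ∧ j' ∈ D ∧ c j ≠ c j' ∧ dist j j' ≤ 2 * lam))
    (j₀ : X) (hj₀ : j₀ ∈ D) :
    ∃ P : Finset (Finset X),
      P.biUnion id = (D.filter fun j => G.Reachable j₀ j) ∧
      (∀ K ∈ P, ∀ K' ∈ P, K ≠ K' → Disjoint K K') ∧
      (∀ K ∈ P, (K.card = 2 ∨ K.card = 3) ∧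
        (∀ j ∈ K, ∀ j' ∈ K, j ≠ j' → c j ≠ c j') ∧
        (∀ j ∈ K, ∀ j' ∈ K, dist j j' ≤ 10 * lam)) ∧
      (P.filter fun K => K.card = 3).card ≤ 1 := by
  obtain ⟨Fs, σ, hFsD, hσFs, hσd, hcapR⟩ := h
  set Cpts := D.filter (fun j => G.Reachable j₀ j) with hCdef
  set Q : X → Finset X := fun i => D.filter (fun j => σ j = i) with hQdef
  set S := Cpts.image σ with hSdef
  have hCmem : ∀ j, j ∈ Cpts ↔ j ∈ D ∧ G.Reachable j₀ j := by
    intro j; rw [hCdef, Finset.mem_filter]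
  have hQmem : ∀ i j, j ∈ Q i ↔ j ∈ D ∧ σ j = i := by
    intro i j; rw [hQdef, Finset.mem_filter]
  -- integer cap
  have hcapQ : ∀ i ∈ Fs, ∀ e, 2 * cnt c (Q i) e ≤ (Q i).card := by
    intro i hi e
    have hreal := hcapR i hi e
    have hset : (Q i).filter (fun j => c j = e) =
        D.filter (fun j => σ j = i ∧ c j = e) := by
      rw [hQdef, Finset.filter_filter]
    have : ((2 : ℝ) * ((Q i).filter (fun j => c j = e)).card) ≤ ((Q i).card : ℝ) := by
      rw [hset, hQdef]
      linarith
    unfold cnt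
    exact_mod_cast this
  -- each nonempty cluster has a second color
  have hsecond : ∀ j ∈ D, ∃ w ∈ Q (σ j), c w ≠ c j := by
    intro j hj
    have hjQ : j ∈ Q (σ j) := (hQmem _ j).2 ⟨hj, rfl⟩
    have h1 : 1 ≤ cnt c (Q (σ j)) (c j) := cnt_pos_of_mem c hjQ
    have h2 := hcapQ (σ j) (hσFs j hj) (c j)
    exact exists_ne_color c (by omega)
  -- cluster diameter
  have hdiamQ : ∀ i, ∀ u ∈ Q i, ∀ v ∈ Q i, dist u v ≤ 2 * lam := by
    intro i u hu v hv
    obtain ⟨huD, huσ⟩ := (hQmem i u).1 hu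
    obtain ⟨hvD, hvσ⟩ := (hQmem i v).1 hv
    have h1 := dist_triangle u (σ u) v
    have h2 := hσd u huD
    have h3 : dist (σ u) v = dist v (σ v) := by rw [dist_comm, hvσ, huσ]
    have h4 := hσd v hvD
    linarith
  -- reachability within a cluster
  have hstep : ∀ j ∈ Cpts, ∀ u ∈ Q (σ j), u ∈ Cpts := by
    intro j hj u hu
    obtain ⟨hjD, hjreach⟩ := (hCmem j).1 hj
    obtain ⟨huD, huσ⟩ := (hQmem _ u).1 hu
    have hjQ : j ∈ Q (σ j) := (hQmem _ j).2 ⟨hjD, rfl⟩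
    have hdju : dist j u ≤ 2 * lam := hdiamQ (σ j) j hjQ u hu
    refine (hCmem u).2 ⟨huD, hjreach.trans ?_⟩
    by_cases hcc : c j = c u
    · by_cases hju : j = u
      · exact hju ▸ SimpleGraph.Reachable.refl j
      · obtain ⟨w, hw, hwc⟩ := hsecond j hjD
        obtain ⟨hwD, hwσ⟩ := (hQmem _ w).1 hw
        have hr1 : G.Adj j w := (hG j w).2 ⟨hjD, hwD, fun hh => hwc hh.symm,
          hdiamQ (σ j) j hjQ w hw⟩
        have hr2 : G.Adj w u := (hG w u).2 ⟨hwD, huD, fun hh => hwc (hcc ▸ hh),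
          hdiamQ (σ j) w hw u hu⟩
        exact hr1.reachable.trans hr2.reachable
    · exact ((hG j u).2 ⟨hjD, huD, hcc, hdju⟩).reachable
  have hQsub : ∀ j ∈ Cpts, Q (σ j) ⊆ Cpts := fun j hj u hu => hstep j hj u hu
  have hptsS : pts Q S = Cpts := by
    apply Finset.Subset.antisymm
    · intro x hx
      obtain ⟨i, hi, hxQ⟩ := Finset.mem_biUnion.1 hx
      obtain ⟨j, hjC, hji⟩ := Finset.mem_image.1 hi
      exact hQsub j hjC (hji ▸ hxQ)
    · intro j hj
      refine Finset.mem_biUnion.2 ⟨σ j, Finset.mem_image.2 ⟨j, hj, rfl⟩, ?_⟩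
      exact (hQmem _ j).2 ⟨(Finset.mem_filter.1 hj).1, rfl⟩
  have hj₀C : j₀ ∈ Cpts := (hCmem j₀).2 ⟨hj₀, SimpleGraph.Reachable.refl j₀⟩
  -- hypotheses for main
  have H1S : ∀ i ∈ S, 2 ≤ (Q i).card := by
    intro i hi
    obtain ⟨j, hjC, hji⟩ := Finset.mem_image.1 hi
    have hjD : j ∈ D := (Finset.mem_filter.1 hjC).1
    obtain ⟨w, hw, hwc⟩ := hsecond j hjD
    have hjQ : j ∈ Q i := hji ▸ (hQmem _ j).2 ⟨hjD, rfl⟩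
    have := Finset.one_lt_card.2 ⟨j, hjQ, w, hji ▸ hw, fun hh => hwc (by rw [← hh])⟩
    omega
  have H2S : ∀ i ∈ S, ∀ e, 2 * cnt c (Q i) e ≤ (Q i).card := by
    intro i hi
    obtain ⟨j, hjC, hji⟩ := Finset.mem_image.1 hi
    exact hcapQ i (hji ▸ hσFs j (Finset.mem_filter.1 hjC).1)
  have H3S : ∀ i ∈ S, ∀ u ∈ Q i, ∀ v ∈ Q i, dist u v ≤ 2 * lam :=
    fun i _ => hdiamQ i
  have H4S : ∀ i ∈ S, ∀ j ∈ S, i ≠ j → Disjoint (Q i) (Q j) := by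
    intro i _ j _ hij
    rw [Finset.disjoint_left]
    intro x hx hx'
    exact hij (((hQmem i x).1 hx).2 ▸ ((hQmem j x).1 hx').2 ▸ rfl)
  have hconnS : Conn lam Q S := by
    have key : ∀ (x y : X) (w : G.Walk x y), x ∈ Cpts →
        Relation.ReflTransGen (Rel lam Q S) (σ x) (σ y) := by
      intro x y w
      induction w with
      | nil => intro _; exact Relation.ReflTransGen.refl
      | @cons a b d hadj p ih =>
        intro haC
        obtain ⟨haD, hbD, hcc, hdist⟩ := (hG a b).1 hadj
        have hbC : b ∈ Cpts := (hCmem b).2 ⟨hbD, ((hCmem a).1 haC).2.trans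
          hadj.reachable⟩
        have hrest := ih hbC
        by_cases hσab : σ a = σ b
        · rw [hσab]; exact hrest
        · refine Relation.ReflTransGen.head ⟨Finset.mem_image.2 ⟨a, haC, rfl⟩,
            Finset.mem_image.2 ⟨b, hbC, rfl⟩, hσab, a, (hQmem _ a).2 ⟨haD, rfl⟩,
            b, (hQmem _ b).2 ⟨hbD, rfl⟩, hdist⟩ hrest
    intro i hi j hj
    obtain ⟨ja, hjaC, hja⟩ := Finset.mem_image.1 hi
    obtain ⟨jb, hjbC, hjb⟩ := Finset.mem_image.1 hj
    have hr : G.Reachable ja jb :=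
      (((hCmem ja).1 hjaC).2).symm.trans ((hCmem jb).1 hjbC).2
    obtain ⟨w⟩ := hr
    exact hja ▸ hjb ▸ key ja jb w hjaC
  have hSne : S.Nonempty := ⟨σ j₀, Finset.mem_image.2 ⟨j₀, hj₀C, rfl⟩⟩
  have hrS : σ j₀ ∈ S := Finset.mem_image.2 ⟨j₀, hj₀C, rfl⟩
  obtain ⟨hEv, hOd⟩ := main lam hlam c Q S.card S le_rfl hSne H1S H2S H3S H4S
    hconnS (σ j₀) hrS
  rw [hptsS] at hEv hOd
  by_cases hpar : Even Cpts.card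
  · obtain ⟨P, hbi, hdis, hK⟩ := (hEv hpar).1
    refine ⟨P, hbi, hdis, ?_, ?_⟩
    · intro K hK'
      obtain ⟨h2, hc2, hd2⟩ := hK K hK'
      exact ⟨Or.inl h2, hc2, hd2⟩
    · have : P.filter (fun K => K.card = 3) = ∅ := by
        apply Finset.filter_eq_empty_iff.2
        intro K hK'
        have := (hK K hK').1
        omega
      rw [this]
      simp
  · obtain ⟨K₃, P, hsub, hcard3, hc3, hd3, hbi, hdis, hK⟩ := (hOd hpar).2
    have hK₃P : K₃ ∉ P := by
      intro hmem
      have := (hK K₃ hmem).1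
      omega
    refine ⟨insert K₃ P, ?_, ?_, ?_, ?_⟩
    · rw [Finset.biUnion_insert, hbi]
      exact Finset.union_sdiff_of_subset hsub
    · have hgen : ∀ K ∈ P, Disjoint K₃ K := by
        intro K hKP
        have hsub' : K ⊆ Cpts \ K₃ := by
          rw [← hbi]
          intro x hx
          exact Finset.mem_biUnion.2 ⟨K, hKP, hx⟩
        rw [Finset.disjoint_right]
        intro x hx hx'
        exact (Finset.mem_sdiff.1 (hsub' hx)).2 hx'
      intro K hK' K' hK'' hne
      rcases Finset.mem_insert.1 hK' with h1 | h1
      · rcases Finset.mem_insert.1 hK'' with h2 | h2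
        · exact absurd (h1.trans h2.symm) hne
        · rw [h1]; exact hgen K' h2
      · rcases Finset.mem_insert.1 hK'' with h2 | h2
        · rw [h2]; exact (hgen K h1).symm
        · exact hdis K h1 K' h2 hne
    · intro K hK'
      rcases Finset.mem_insert.1 hK' with rfl | hK'
      · exact ⟨Or.inr hcard3, hc3, hd3⟩
      · obtain ⟨h2, hc2, hd2⟩ := hK K hK'
        exact ⟨Or.inl h2, hc2, hd2⟩
    · have hsub3 : (insert K₃ P).filter (fun K => K.card = 3) ⊆ {K₃} := by
        intro K hK'
        obtain ⟨hmem, hc⟩ := Finset.mem_filter.1 hK'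
        rcases Finset.mem_insert.1 hmem with rfl | hmem
        · exact Finset.mem_singleton_self _
        · have := (hK K hmem).1
          omega
      have := Finset.card_le_card hsub3
      simpa using this
end

section
/- Let λ ≥ 0 and let K₀, K₁, …, K_ℓ (ℓ ≥ 1) be pairwise disjoint finite sets of colored points in a metric space such that: K₀ and K_ℓ each have exactly 3 points with pairwise distinct colors; each Kᵣ for 1 ≤ r ≤ ℓ−1 has exactly 2 points with distinct colors; each Kᵣ has diameter at most 2λ; and for each 0 ≤ r < ℓ, the minimum distance between a point of Kᵣ and a point of K_{r+1} is at most 6λ. Then the union K₀ ∪ K₁ ∪ … ∪ K_ℓ can be partitioned into ℓ + 2 sets, each consisting of exactly 2 points of distinct colors and each of diameter at most 10λ. -/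
private lemma aux_pair {X C : Type*} [MetricSpace X] [DecidableEq X]
    (c : X → C) (lam : ℝ) (hlam : 0 ≤ lam) {a b : X}
    (hab : a ≠ b) (hc : c a ≠ c b) (hd : dist a b ≤ 10 * lam) :
    ({a, b} : Finset X).card = 2 ∧
      (∀ j ∈ ({a, b} : Finset X), ∀ j' ∈ ({a, b} : Finset X), j ≠ j' → c j ≠ c j') ∧
      (∀ j ∈ ({a, b} : Finset X), ∀ j' ∈ ({a, b} : Finset X), dist j j' ≤ 10 * lam) := by
  refine ⟨by simp [hab], ?_, ?_⟩
  · intro j hj j' hj' hne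
    simp only [Finset.mem_insert, Finset.mem_singleton] at hj hj'
    rcases hj with rfl | rfl <;> rcases hj' with rfl | rfl <;> simp_all [Ne.symm hc]
  · intro j hj j' hj'
    simp only [Finset.mem_insert, Finset.mem_singleton] at hj hj'
    have := dist_comm a b
    have h1 : dist a a ≤ 10 * lam := by rw [dist_self]; linarith
    have h2 : dist b b ≤ 10 * lam := by rw [dist_self]; linarith
    have h3 : dist b a ≤ 10 * lam := by rw [dist_comm]; exact hd
    rcases hj with rfl | rfl <;> rcases hj' with rfl | rfl <;> assumption

private lemma aux_shift {X C : Type*} [MetricSpace X] [DecidableEq X]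
    (c : X → C) (lam : ℝ) (hlam : 0 ≤ lam) :
    ∀ (n : ℕ) (a : X) (K : ℕ → Finset X),
    (∀ r ≤ n, a ∉ K r) →
    (∀ r ≤ n, ∀ s ≤ n, r ≠ s → Disjoint (K r) (K s)) →
    (K n).card = 3 →
    (∀ r < n, (K r).card = 2) →
    (∀ r ≤ n, ∀ j ∈ K r, ∀ j' ∈ K r, j ≠ j' → c j ≠ c j') →
    (∀ r ≤ n, ∀ j ∈ K r, ∀ j' ∈ K r, dist j j' ≤ 2 * lam) →
    (∀ r < n, ∃ j ∈ K r, ∃ j' ∈ K (r + 1), dist j j' ≤ 6 * lam) →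
    (∃ j ∈ K 0, dist a j ≤ 8 * lam) →
    ∃ P : Finset (Finset X),
      P.card = n + 2 ∧
      P.biUnion id = insert a ((Finset.range (n + 1)).biUnion K) ∧
      (∀ A ∈ P, ∀ B ∈ P, A ≠ B → Disjoint A B) ∧
      ∀ A ∈ P, A.card = 2 ∧
        (∀ j ∈ A, ∀ j' ∈ A, j ≠ j' → c j ≠ c j') ∧
        (∀ j ∈ A, ∀ j' ∈ A, dist j j' ≤ 10 * lam) := by
  intro n
  induction n with
  | zero =>
    intro a K ha hdisj h3 hmid hcol hdiam hcons ⟨j, hj, hdj⟩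
    obtain ⟨x, y, z, hxy, hxz, hyz, hK⟩ := Finset.card_eq_three.mp h3
    have hx : x ∈ K 0 := by rw [hK]; simp
    have hy : y ∈ K 0 := by rw [hK]; simp
    have hz : z ∈ K 0 := by rw [hK]; simp
    -- find b ∈ K 0 with c a ≠ c b, rest b1 b2
    obtain ⟨b, b1, b2, hne1, hne2, hne3, hbK, hcab⟩ :
        ∃ b b1 b2 : X, b ≠ b1 ∧ b ≠ b2 ∧ b1 ≠ b2 ∧ K 0 = {b, b1, b2} ∧ c a ≠ c b := by
      by_cases h : c a = c x
      · refine ⟨y, x, z, hxy.symm, hyz, hxz, ?_, ?_⟩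
        · rw [hK]; ext t; simp; tauto
        · intro h'; exact hcol 0 (le_refl 0) x hx y hy hxy (h.symm.trans h')
      · exact ⟨x, y, z, hxy, hxz, hyz, hK, h⟩
    have hb : b ∈ K 0 := by rw [hbK]; simp
    have hb1 : b1 ∈ K 0 := by rw [hbK]; simp
    have hb2 : b2 ∈ K 0 := by rw [hbK]; simp
    have hab : a ≠ b := fun h => ha 0 (le_refl 0) (h ▸ hb)
    have hdab : dist a b ≤ 10 * lam := by
      have h1 := hdiam 0 (le_refl 0) j hj b hb
      calc dist a b ≤ dist a j + dist j b := dist_triangle a j b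
        _ ≤ 10 * lam := by linarith
    refine ⟨{{a, b}, {b1, b2}}, ?_, ?_, ?_, ?_⟩
    · rw [Finset.card_insert_of_notMem, Finset.card_singleton]
      simp only [Finset.mem_singleton]
      intro h
      have : a ∈ ({b1, b2} : Finset X) := by rw [← h]; simp
      simp only [Finset.mem_insert, Finset.mem_singleton] at this
      rcases this with rfl | rfl
      exacts [ha 0 (le_refl 0) hb1, ha 0 (le_refl 0) hb2]
    · have hr1 : (Finset.range 1).biUnion K = K 0 := by simp
      rw [hr1, hbK]
      ext t
      simp only [Finset.mem_biUnion, Finset.mem_insert, Finset.mem_singleton, id]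
      constructor
      · rintro ⟨A, hA | hA, ht⟩ <;> subst hA <;>
          simp only [Finset.mem_insert, Finset.mem_singleton] at ht <;> tauto
      · rintro (rfl | rfl | rfl | rfl)
        · refine ⟨_, Or.inl rfl, ?_⟩; simp
        · refine ⟨_, Or.inl rfl, ?_⟩; simp
        · refine ⟨_, Or.inr rfl, ?_⟩; simp
        · refine ⟨_, Or.inr rfl, ?_⟩; simp
    · intro A hA B hB hAB
      simp only [Finset.mem_insert, Finset.mem_singleton] at hA hB
      have key : Disjoint ({a, b} : Finset X) {b1, b2} := by
        rw [Finset.disjoint_left]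
        intro t ht ht'
        simp only [Finset.mem_insert, Finset.mem_singleton] at ht ht'
        rcases ht with rfl | rfl
        · rcases ht' with rfl | rfl
          exacts [ha 0 (le_refl 0) hb1, ha 0 (le_refl 0) hb2]
        · rcases ht' with rfl | rfl
          exacts [hne1 rfl, hne2 rfl]
      rcases hA with rfl | rfl <;> rcases hB with rfl | rfl
      · exact absurd rfl hAB
      · exact key
      · exact key.symm
      · exact absurd rfl hAB
    · intro A hA
      simp only [Finset.mem_insert, Finset.mem_singleton] at hA
      rcases hA with rfl | rfl
      · exact aux_pair c lam hlam hab hcab hdab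
      · refine aux_pair c lam hlam hne3 (hcol 0 (le_refl 0) b1 hb1 b2 hb2 hne3) ?_
        have := hdiam 0 (le_refl 0) b1 hb1 b2 hb2
        linarith
  | succ n ih =>
    intro a K ha hdisj h3 hmid hcol hdiam hcons ⟨j, hj, hdj⟩
    obtain ⟨x, y, hxy, hK⟩ := Finset.card_eq_two.mp (hmid 0 (Nat.succ_pos n))
    have hx : x ∈ K 0 := by rw [hK]; simp
    have hy : y ∈ K 0 := by rw [hK]; simp
    obtain ⟨b, a', hba, hKb, hcab⟩ :
        ∃ b a' : X, b ≠ a' ∧ K 0 = {b, a'} ∧ c a ≠ c b := by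
      by_cases h : c a = c x
      · refine ⟨y, x, hxy.symm, by rw [hK]; ext t; simp; tauto, ?_⟩
        intro h'; exact hcol 0 (Nat.zero_le _) x hx y hy hxy (h.symm.trans h')
      · exact ⟨x, y, hxy, hK, h⟩
    have hb : b ∈ K 0 := by rw [hKb]; simp
    have ha' : a' ∈ K 0 := by rw [hKb]; simp
    -- obtain starting distance for a'
    obtain ⟨u, hu, v, hv, huv⟩ := hcons 0 (Nat.succ_pos n)
    have hstart : ∃ j ∈ K 1, dist a' j ≤ 8 * lam := by
      refine ⟨v, hv, ?_⟩
      have h1 := hdiam 0 (Nat.zero_le _) a' ha' u hu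
      calc dist a' v ≤ dist a' u + dist u v := dist_triangle a' u v
        _ ≤ 8 * lam := by linarith
    obtain ⟨P', hc', hbU', hdsj', hprop'⟩ :=
      ih a' (fun r => K (r + 1))
        (fun r hr h => Finset.disjoint_left.mp
          (hdisj 0 (Nat.zero_le _) (r + 1) (by omega) (by omega)) ha' h)
        (fun r hr s hs hrs => hdisj (r + 1) (by omega) (s + 1) (by omega) (by omega))
        h3 (fun r hr => hmid (r + 1) (by omega))
        (fun r hr => hcol (r + 1) (by omega))
        (fun r hr => hdiam (r + 1) (by omega))
        (fun r hr => hcons (r + 1) (by omega)) hstart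
    have hab : a ≠ b := fun h => ha 0 (Nat.zero_le _) (h ▸ hb)
    have hdab : dist a b ≤ 10 * lam := by
      have h1 := hdiam 0 (Nat.zero_le _) j hj b hb
      calc dist a b ≤ dist a j + dist j b := dist_triangle a j b
        _ ≤ 10 * lam := by linarith
    -- a and b not in the union covered by P'
    have hnotin : ∀ t ∈ ({a, b} : Finset X), t ∉ P'.biUnion id := by
      intro t ht htP
      rw [hbU'] at htP
      simp only [Finset.mem_insert, Finset.mem_biUnion, Finset.mem_range] at htP
      simp only [Finset.mem_insert, Finset.mem_singleton] at ht
      rcases ht with rfl | rfl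
      · rcases htP with rfl | ⟨r, hr, hmem⟩
        · exact ha 0 (Nat.zero_le _) ha'
        · exact ha (r + 1) (by omega) hmem
      · rcases htP with rfl | ⟨r, hr, hmem⟩
        · exact hba rfl
        · exact Finset.disjoint_left.mp
            (hdisj 0 (Nat.zero_le _) (r + 1) (by omega) (by omega)) hb hmem
    have hnew : ({a, b} : Finset X) ∉ P' := by
      intro h
      exact hnotin a (by simp) (Finset.mem_biUnion.mpr ⟨_, h, by simp⟩)
    refine ⟨insert {a, b} P', ?_, ?_, ?_, ?_⟩
    · rw [Finset.card_insert_of_notMem hnew, hc']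
    · rw [Finset.biUnion_insert, hbU']
      ext t
      simp only [Finset.mem_union, Finset.mem_insert, Finset.mem_singleton, id,
        Finset.mem_biUnion, Finset.mem_range]
      constructor
      · rintro ((rfl | rfl) | rfl | ⟨r, hr, hm⟩)
        · exact Or.inl rfl
        · exact Or.inr ⟨0, by omega, hb⟩
        · exact Or.inr ⟨0, by omega, ha'⟩
        · exact Or.inr ⟨r + 1, by omega, hm⟩
      · rintro (rfl | ⟨r, hr, hm⟩)
        · exact Or.inl (Or.inl rfl)
        · rcases r with _ | r
          · rw [hKb] at hm
            simp only [Finset.mem_insert, Finset.mem_singleton] at hm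
            rcases hm with rfl | rfl
            · exact Or.inl (Or.inr rfl)
            · exact Or.inr (Or.inl rfl)
          · exact Or.inr (Or.inr ⟨r, by omega, hm⟩)
    · intro A hA B hB hAB
      simp only [Finset.mem_insert] at hA hB
      have key : ∀ B ∈ P', Disjoint ({a, b} : Finset X) B := by
        intro B hB
        rw [Finset.disjoint_left]
        intro t ht htB
        exact hnotin t ht (Finset.mem_biUnion.mpr ⟨B, hB, htB⟩)
      rcases hA with rfl | hA <;> rcases hB with rfl | hB
      · exact absurd rfl hAB
      · exact key B hB
      · exact (key A hA).symm
      · exact hdsj' A hA B hB hAB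
    · intro A hA
      simp only [Finset.mem_insert] at hA
      rcases hA with rfl | hA
      · exact aux_pair c lam hlam hab hcab hdab
      · exact hprop' A hA

/-- The shifting lemma. A path of caplets `K₀, …, K_ℓ` (triangle caplets at the
ends, edge caplets in between), each of diameter at most `2λ`, with consecutive caplets at
distance at most `6λ`, can be repartitioned into `ℓ + 2` edge caplets of diameter at most
`10λ`. -/
theorem stmt_12 {X C : Type*} [MetricSpace X] [DecidableEq X]
    (c : X → C) (lam : ℝ) (hlam : 0 ≤ lam) (ℓ : ℕ) (hℓ : 1 ≤ ℓ)
    (K : ℕ → Finset X)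
    (hdisj : ∀ r ≤ ℓ, ∀ s ≤ ℓ, r ≠ s → Disjoint (K r) (K s))
    (h0 : (K 0).card = 3) (hlast : (K ℓ).card = 3)
    (hmid : ∀ r, 1 ≤ r → r < ℓ → (K r).card = 2)
    (hcol : ∀ r ≤ ℓ, ∀ j ∈ K r, ∀ j' ∈ K r, j ≠ j' → c j ≠ c j')
    (hdiam : ∀ r ≤ ℓ, ∀ j ∈ K r, ∀ j' ∈ K r, dist j j' ≤ 2 * lam)
    (hconsec : ∀ r < ℓ, ∃ j ∈ K r, ∃ j' ∈ K (r + 1), dist j j' ≤ 6 * lam) :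
    ∃ P : Finset (Finset X),
      P.card = ℓ + 2 ∧
      P.biUnion id = (Finset.range (ℓ + 1)).biUnion K ∧
      (∀ A ∈ P, ∀ B ∈ P, A ≠ B → Disjoint A B) ∧
      ∀ A ∈ P, A.card = 2 ∧
        (∀ j ∈ A, ∀ j' ∈ A, j ≠ j' → c j ≠ c j') ∧
        (∀ j ∈ A, ∀ j' ∈ A, dist j j' ≤ 10 * lam) := by
  obtain ⟨m, rfl⟩ : ∃ m, ℓ = m + 1 := ⟨ℓ - 1, by omega⟩
  obtain ⟨a, hamem, v0, hv0, hav0⟩ := hconsec 0 (by omega)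
  -- remaining two points of K 0
  have hcard : (K 0 \ {a}).card = 2 := by
    rw [Finset.card_sdiff_of_subset (by simpa using hamem), h0, Finset.card_singleton]
  obtain ⟨u, w, huw, hUW⟩ := Finset.card_eq_two.mp hcard
  have hu : u ∈ K 0 ∧ u ≠ a := by
    have : u ∈ K 0 \ {a} := by rw [hUW]; simp
    simpa using this
  have hw : w ∈ K 0 ∧ w ≠ a := by
    have : w ∈ K 0 \ {a} := by rw [hUW]; simp
    simpa using this
  have hK0 : K 0 = {a, u, w} := by
    ext t
    simp only [Finset.mem_insert, Finset.mem_singleton]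
    constructor
    · intro ht
      by_cases h : t = a
      · exact Or.inl h
      · have : t ∈ K 0 \ {a} := by simp [ht, h]
        rw [hUW] at this
        simpa using Or.inr (by simpa using this)
    · rintro (rfl | rfl | rfl)
      exacts [hamem, hu.1, hw.1]
  obtain ⟨P', hc', hbU', hdsj', hprop'⟩ :=
    aux_shift c lam hlam m a (fun r => K (r + 1))
      (fun r hr h => Finset.disjoint_left.mp
        (hdisj 0 (by omega) (r + 1) (by omega) (by omega)) hamem h)
      (fun r hr s hs hrs => hdisj (r + 1) (by omega) (s + 1) (by omega) (by omega))
      hlast (fun r hr => hmid (r + 1) (by omega) (by omega))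
      (fun r hr => hcol (r + 1) (by omega))
      (fun r hr => hdiam (r + 1) (by omega))
      (fun r hr => hconsec (r + 1) (by omega))
      ⟨v0, hv0, by linarith [dist_nonneg (x := a) (y := v0)]⟩
  have hnotin : ∀ t ∈ ({u, w} : Finset X), t ∉ P'.biUnion id := by
    intro t ht htP
    rw [hbU'] at htP
    simp only [Finset.mem_insert, Finset.mem_biUnion, Finset.mem_range] at htP
    simp only [Finset.mem_insert, Finset.mem_singleton] at ht
    have htK0 : t ∈ K 0 := by rcases ht with rfl | rfl; exacts [hu.1, hw.1]
    have htna : t ≠ a := by rcases ht with rfl | rfl; exacts [hu.2, hw.2]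
    rcases htP with rfl | ⟨r, hr, hmem⟩
    · exact htna rfl
    · exact Finset.disjoint_left.mp
        (hdisj 0 (by omega) (r + 1) (by omega) (by omega)) htK0 hmem
  have hnew : ({u, w} : Finset X) ∉ P' := by
    intro h
    exact hnotin u (by simp) (Finset.mem_biUnion.mpr ⟨_, h, by simp⟩)
  refine ⟨insert {u, w} P', ?_, ?_, ?_, ?_⟩
  · rw [Finset.card_insert_of_notMem hnew, hc']
  · rw [Finset.biUnion_insert, hbU']
    ext t
    simp only [Finset.mem_union, Finset.mem_insert, Finset.mem_singleton, id,
      Finset.mem_biUnion, Finset.mem_range]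
    constructor
    · rintro ((rfl | rfl) | rfl | ⟨r, hr, hm⟩)
      · exact ⟨0, by omega, hu.1⟩
      · exact ⟨0, by omega, hw.1⟩
      · exact ⟨0, by omega, hamem⟩
      · exact ⟨r + 1, by omega, hm⟩
    · rintro ⟨r, hr, hm⟩
      rcases r with _ | r
      · rw [hK0] at hm
        simp only [Finset.mem_insert, Finset.mem_singleton] at hm
        rcases hm with rfl | rfl | rfl
        · exact Or.inr (Or.inl rfl)
        · exact Or.inl (Or.inl rfl)
        · exact Or.inl (Or.inr rfl)
      · exact Or.inr (Or.inr ⟨r, by omega, hm⟩)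
  · intro A hA B hB hAB
    simp only [Finset.mem_insert] at hA hB
    have key : ∀ B ∈ P', Disjoint ({u, w} : Finset X) B := by
      intro B hB
      rw [Finset.disjoint_left]
      intro t ht htB
      exact hnotin t ht (Finset.mem_biUnion.mpr ⟨B, hB, htB⟩)
    rcases hA with rfl | hA <;> rcases hB with rfl | hB
    · exact absurd rfl hAB
    · exact key B hB
    · exact (key A hA).symm
    · exact hdsj' A hA B hB hAB
  · intro A hA
    simp only [Finset.mem_insert] at hA
    rcases hA with rfl | hA
    · refine aux_pair c lam hlam huw (hcol 0 (by omega) u hu.1 w hw.1 huw) ?_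
      have := hdiam 0 (by omega) u hu.1 w hw.1
      linarith
    · exact hprop' A hA
end

section
/- Let D be a finite set of points in a metric space, each assigned a color, let λ > 0, and let F* ⊆ D and σ : D → F* be such that d(j, σ(j)) ≤ λ for all j ∈ D and, for every i ∈ F* with σ⁻¹(i) nonempty and every color c₀, at most half of the points of σ⁻¹(i) have color c₀. Then for every i ∈ F* with σ⁻¹(i) nonempty, the cluster σ⁻¹(i) admits a partition into caplets (sets of size 2 or 3 of pairwise distinct colors, with at most one of size 3) each of diameter at most 2λ; in particular any two points of σ⁻¹(i) are at distance at most 2λ. -/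
open Finset

lemma caplet_decomp {X C : Type*} [DecidableEq X] [DecidableEq C] (c : X → C) :
    ∀ n (S : Finset X), S.card = n → S.Nonempty →
    (∀ c₀ : C, 2 * (S.filter fun x => c x = c₀).card ≤ S.card) →
    ∃ P : Finset (Finset X),
      P.biUnion id = S ∧
      (∀ K ∈ P, ∀ K' ∈ P, K ≠ K' → Disjoint K K') ∧
      (∀ K ∈ P, (K.card = 2 ∨ K.card = 3) ∧
        (∀ j ∈ K, ∀ j' ∈ K, j ≠ j' → c j ≠ c j')) ∧
      (P.filter fun K => K.card = 3).card ≤ 1 := by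
  intro n
  induction n using Nat.strong_induction_on with
  | _ n ih =>
  intro S hcard hne hcol
  obtain ⟨x, hx⟩ := hne
  have h2 : 2 ≤ n := by
    have h := hcol (c x)
    have hx1 : 1 ≤ (S.filter fun y => c y = c x).card :=
      card_pos.mpr ⟨x, mem_filter.mpr ⟨hx, rfl⟩⟩
    omega
  by_cases h3 : n ≤ 3
  · -- S itself is a caplet
    refine ⟨{S}, by simp, by simp, ?_, ?_⟩
    · intro K hK
      simp only [mem_singleton] at hK; subst hK
      refine ⟨by omega, ?_⟩
      intro j hj j' hj' hne' hcc
      have hsub : ({j, j'} : Finset X) ⊆ K.filter fun y => c y = c j := by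
        intro z hz
        simp only [mem_insert, mem_singleton] at hz
        rcases hz with rfl | rfl
        · exact mem_filter.mpr ⟨hj, rfl⟩
        · exact mem_filter.mpr ⟨hj', hcc.symm⟩
      have h2' : 2 ≤ (K.filter fun y => c y = c j).card := by
        calc 2 = ({j, j'} : Finset X).card := (card_pair hne').symm
        _ ≤ _ := card_le_card hsub
      have := hcol (c j)
      omega
    · exact (card_filter_le _ _).trans (by simp)
  · push_neg at h3
    have h4 : 4 ≤ n := h3
    obtain ⟨a, haS, hamax⟩ := S.exists_max_image (fun x => (S.filter fun y => c y = c x).card) ⟨x, hx⟩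
    have hTne : (S.filter fun z => ¬ c z = c a).Nonempty := by
      rw [← card_pos]
      have h1 := card_filter_add_card_filter_not (s := S) (p := fun z => c z = c a)
      have h2' := hcol (c a)
      omega
    obtain ⟨b, hbT, hbmax⟩ := (S.filter fun z => ¬ c z = c a).exists_max_image
      (fun x => (S.filter fun y => c y = c x).card) hTne
    have hbS : b ∈ S := (mem_filter.mp hbT).1
    have hcb : c b ≠ c a := (mem_filter.mp hbT).2
    have hab : a ≠ b := fun h => hcb (h ▸ rfl)
    have hSsub : ({a, b} : Finset X) ⊆ S := by
      intro z hz
      simp only [mem_insert, mem_singleton] at hz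
      rcases hz with rfl | rfl <;> assumption
    have hcard' : (S \ {a, b}).card = n - 2 := by
      rw [card_sdiff_of_subset hSsub, hcard, card_pair hab]
    have hfilt : ∀ (p : X → Prop) [DecidablePred p],
        (S \ {a, b}).filter p = (S.filter p) \ {a, b} := by
      intro p _
      ext z
      simp only [mem_filter, mem_sdiff]
      tauto
    -- the counting invariant for S \ {a,b}
    have hbound : ∀ c₀ : C, 2 * ((S \ {a, b}).filter fun z => c z = c₀).card ≤ n - 2 := by
      intro c₀
      rw [hfilt]
      by_cases hca : c₀ = c a
      · subst hca
        have haf : a ∈ S.filter fun z => c z = c a := mem_filter.mpr ⟨haS, rfl⟩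
        have hsub : (S.filter fun z => c z = c a) \ {a, b} ⊆
            (S.filter fun z => c z = c a).erase a := by
          intro z hz
          rw [mem_sdiff] at hz
          simp only [mem_insert, mem_singleton] at hz
          exact mem_erase.mpr ⟨fun h => hz.2 (Or.inl h), hz.1⟩
        have h1 := card_le_card hsub
        rw [card_erase_of_mem haf] at h1
        have h2' := hcol (c a)
        omega
      · by_cases hcbb : c₀ = c b
        · subst hcbb
          have hbf : b ∈ S.filter fun z => c z = c b := mem_filter.mpr ⟨hbS, rfl⟩
          have hsub : (S.filter fun z => c z = c b) \ {a, b} ⊆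
              (S.filter fun z => c z = c b).erase b := by
            intro z hz
            rw [mem_sdiff] at hz
            simp only [mem_insert, mem_singleton] at hz
            exact mem_erase.mpr ⟨fun h => hz.2 (Or.inr h), hz.1⟩
          have h1 := card_le_card hsub
          rw [card_erase_of_mem hbf] at h1
          have h2' := hcol (c b)
          omega
        · have hle : ((S.filter fun z => c z = c₀) \ {a, b}).card ≤
              (S.filter fun z => c z = c₀).card := card_le_card sdiff_subset
          rcases Nat.eq_zero_or_pos (S.filter fun z => c z = c₀).card with h0 | hpos
          · omega
          · obtain ⟨y, hy⟩ := card_pos.mp hpos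
            have hyS : y ∈ S := (mem_filter.mp hy).1
            have hyc : c y = c₀ := (mem_filter.mp hy).2
            have hyT : y ∈ S.filter fun z => ¬ c z = c a :=
              mem_filter.mpr ⟨hyS, fun h => hca (hyc ▸ h)⟩
            have hfy : (S.filter fun z => c z = c y) = (S.filter fun z => c z = c₀) := by
              rw [hyc]
            have hle_b : (S.filter fun z => c z = c₀).card ≤
                (S.filter fun z => c z = c b).card := by
              have := hbmax y hyT
              rwa [hfy] at this
            have hle_a : (S.filter fun z => c z = c b).card ≤
                (S.filter fun z => c z = c a).card := hamax b hbS
            -- the three color classes are disjoint subsets of S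
            have hd1 : Disjoint (S.filter fun z => c z = c a) (S.filter fun z => c z = c b) := by
              rw [disjoint_left]
              intro z h1 h2
              exact hcb (((mem_filter.mp h2).2).symm.trans (mem_filter.mp h1).2)
            have hd2 : Disjoint ((S.filter fun z => c z = c a) ∪ (S.filter fun z => c z = c b))
                (S.filter fun z => c z = c₀) := by
              rw [disjoint_left]
              intro z h1 h2
              have hzc := (mem_filter.mp h2).2
              rcases mem_union.mp h1 with h | h
              · exact hca (hzc.symm.trans (mem_filter.mp h).2)
              · exact hcbb (hzc.symm.trans (mem_filter.mp h).2)
            have hsum : (S.filter fun z => c z = c a).card + (S.filter fun z => c z = c b).card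
                + (S.filter fun z => c z = c₀).card ≤ n := by
              have hsub : ((S.filter fun z => c z = c a) ∪ (S.filter fun z => c z = c b))
                  ∪ (S.filter fun z => c z = c₀) ⊆ S := by
                intro z hz
                rcases mem_union.mp hz with h | h
                · rcases mem_union.mp h with h' | h' <;> exact (mem_filter.mp h').1
                · exact (mem_filter.mp h).1
              have := card_le_card hsub
              rw [card_union_of_disjoint hd2, card_union_of_disjoint hd1, hcard] at this
              exact this
            omega
    obtain ⟨P', hP1, hP2, hP3, hP4⟩ := ih (n - 2) (by omega) (S \ {a, b}) hcard'
      (by rw [← card_pos, hcard']; omega) (by intro c₀; rw [hcard']; exact hbound c₀)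
    have hKsub : ∀ K ∈ P', K ⊆ S \ {a, b} := by
      intro K hK
      rw [← hP1]
      exact subset_biUnion_of_mem id hK
    have hnm : ({a, b} : Finset X) ∉ P' := by
      intro h
      have := hKsub _ h (mem_insert_self a {b})
      rw [mem_sdiff] at this
      exact this.2 (mem_insert_self a {b})
    refine ⟨insert {a, b} P', ?_, ?_, ?_, ?_⟩
    · rw [biUnion_insert, hP1, id]
      exact union_sdiff_of_subset hSsub
    · intro K hK K' hK' hne'
      rcases mem_insert.mp hK with rfl | hK <;> rcases mem_insert.mp hK' with h' | hK'
      · exact absurd h'.symm hne'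
      · rw [disjoint_left]
        intro z hz hz'
        exact ((mem_sdiff.mp (hKsub _ hK' hz')).2) hz
      · subst h'
        rw [disjoint_right]
        intro z hz hz'
        exact ((mem_sdiff.mp (hKsub _ hK hz')).2) hz
      · exact hP2 K hK K' hK' hne'
    · intro K hK
      rcases mem_insert.mp hK with rfl | hK
      · refine ⟨Or.inl (card_pair hab), ?_⟩
        intro j hj j' hj' hjj' hcc
        simp only [mem_insert, mem_singleton] at hj hj'
        rcases hj with rfl | rfl <;> rcases hj' with rfl | rfl
        · exact hjj' rfl
        · exact hcb hcc.symm
        · exact hcb hcc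
        · exact hjj' rfl
      · exact hP3 K hK
    · rw [filter_insert, if_neg (by simp [card_pair hab])]
      exact hP4

/-- Every nonempty cluster of a `(1/2)`-capped clustering of radius `λ` admits a
caplet decomposition with caplets of diameter at most `2λ`; in particular any two points of a
cluster are at distance at most `2λ`. -/
theorem stmt_14 {X C : Type*} [MetricSpace X] [DecidableEq X] [DecidableEq C]
    (D : Finset X) (c : X → C) (lam : ℝ) (hlam : 0 < lam)
    (Fs : Finset X) (σ : X → X) (hF : Fs ⊆ D)
    (hσ : ∀ j ∈ D, σ j ∈ Fs) (hd : ∀ j ∈ D, dist j (σ j) ≤ lam)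
    (hcap : ∀ i ∈ Fs, (D.filter fun j => σ j = i).Nonempty → ∀ c₀ : C,
      ((D.filter fun j => σ j = i ∧ c j = c₀).card : ℝ) ≤
        (1 / 2 : ℝ) * ((D.filter fun j => σ j = i).card : ℝ)) :
    ∀ i ∈ Fs, (D.filter fun j => σ j = i).Nonempty →
      (∃ P : Finset (Finset X),
        P.biUnion id = (D.filter fun j => σ j = i) ∧
        (∀ K ∈ P, ∀ K' ∈ P, K ≠ K' → Disjoint K K') ∧
        (∀ K ∈ P, (K.card = 2 ∨ K.card = 3) ∧
          (∀ j ∈ K, ∀ j' ∈ K, j ≠ j' → c j ≠ c j') ∧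
          (∀ j ∈ K, ∀ j' ∈ K, dist j j' ≤ 2 * lam)) ∧
        (P.filter fun K => K.card = 3).card ≤ 1) ∧
      (∀ j ∈ (D.filter fun j => σ j = i), ∀ j' ∈ (D.filter fun j => σ j = i),
        dist j j' ≤ 2 * lam) := by
  intro i hi hne
  set S := D.filter fun j => σ j = i with hS
  have hdist : ∀ j ∈ S, ∀ j' ∈ S, dist j j' ≤ 2 * lam := by
    intro j hj j' hj'
    obtain ⟨hjD, hji⟩ := Finset.mem_filter.mp hj
    obtain ⟨hj'D, hj'i⟩ := Finset.mem_filter.mp hj'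
    calc dist j j' ≤ dist j i + dist i j' := dist_triangle j i j'
    _ = dist j (σ j) + dist j' (σ j') := by rw [hji, hj'i, dist_comm i j']
    _ ≤ lam + lam := add_le_add (hd j hjD) (hd j' hj'D)
    _ = 2 * lam := by ring
  refine ⟨?_, hdist⟩
  have hcol : ∀ c₀ : C, 2 * (S.filter fun x => c x = c₀).card ≤ S.card := by
    intro c₀
    have h := hcap i hi hne c₀
    have heq : D.filter (fun j => σ j = i ∧ c j = c₀) = S.filter fun x => c x = c₀ := by
      rw [hS, Finset.filter_filter]
    rw [heq] at h
    have : 2 * ((S.filter fun x => c x = c₀).card : ℝ) ≤ (S.card : ℝ) := by linarith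
    exact_mod_cast this
  obtain ⟨P, hP1, hP2, hP3, hP4⟩ := caplet_decomp c S.card S rfl hne hcol
  refine ⟨P, hP1, hP2, ?_, hP4⟩
  intro K hK
  have hKS : K ⊆ S := hP1 ▸ Finset.subset_biUnion_of_mem id hK
  obtain ⟨hc, hcc⟩ := hP3 K hK
  exact ⟨hc, hcc, fun j hj j' hj' => hdist j (hKS hj) j' (hKS hj')⟩
end
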